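/- arXiv:2111.12601 — 8 statements merged into one kernel-verified Lean document; each statement's English description precedes it below -/
import Mathlib

section
/- Let 𝓗 be a complex Hilbert space and H, K positive bounded operators on 𝓗 with H nonsingular (injective). Then the equation XHX = K has at most one positive bounded solution X. -/
set_option synthInstance.maxHeartbeats 1000000 in
/-- For positive `H, K` with `H` nonsingular (injective), the equation `XHX = K` has at most
one positive bounded solution. -/
theorem stmt_2 {𝓗 : Type*} [NormedAddCommGroup 𝓗] [InnerProductSpace ℂ 𝓗] [CompleteSpace 𝓗]
    (H K : 𝓗 →L[ℂ] 𝓗) (hH : 0 ≤ H) (hK : 0 ≤ K)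
    (hHns : Function.Injective (H : 𝓗 → 𝓗)) :
    ∀ X Y : 𝓗 →L[ℂ] 𝓗, 0 ≤ X → 0 ≤ Y → X * H * X = K → Y * H * Y = K → X = Y := by
  intro X Y hX hY hXK hYK
  set S := CFC.sqrt H with hSdef
  have hS0 : (0 : 𝓗 →L[ℂ] 𝓗) ≤ S := CFC.sqrt_nonneg H
  have hSS : S * S = H := CFC.sqrt_mul_sqrt_self H hH
  have hSsa : star S = S := hS0.isSelfAdjoint.star_eq
  -- injectivity of S
  have hSinj : ∀ x : 𝓗, S x = 0 → x = 0 := by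
    intro x hx
    have hHx : H x = 0 := by
      rw [← hSS]
      simp [ContinuousLinearMap.mul_apply, hx]
    exact hHns (by simpa using hHx)
  -- conjugated operators
  have hA0 : (0 : 𝓗 →L[ℂ] 𝓗) ≤ S * X * S := by
    simpa [hSsa] using star_left_conjugate_nonneg hX S
  have hB0 : (0 : 𝓗 →L[ℂ] 𝓗) ≤ S * Y * S := by
    simpa [hSsa] using star_left_conjugate_nonneg hY S
  have hsq : (S * X * S) * (S * X * S) = (S * Y * S) * (S * Y * S) := by
    have : ∀ Z : 𝓗 →L[ℂ] 𝓗, (S * Z * S) * (S * Z * S) = S * (Z * H * Z) * S := by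
      intro Z
      rw [← hSS]; noncomm_ring
    rw [this X, this Y, hXK, hYK]
  have hAB : S * X * S = S * Y * S := by
    have h1 : CFC.sqrt ((S * X * S) * (S * X * S)) = S * X * S := CFC.sqrt_unique rfl hA0
    have h2 : CFC.sqrt ((S * X * S) * (S * X * S)) = S * Y * S := CFC.sqrt_unique hsq.symm hB0
    rw [← h1, h2]
  -- cancel left S
  have hXS : X * S = Y * S := by
    ext x
    have := congrArg (fun T : 𝓗 →L[ℂ] 𝓗 => T x) hAB
    simp only [ContinuousLinearMap.mul_apply] at this
    have h0 : S ((X * S) x - (Y * S) x) = 0 := by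
      simp [ContinuousLinearMap.mul_apply, map_sub, this]
    have := hSinj _ h0
    simpa [sub_eq_zero] using this
  -- take adjoints to cancel right S
  have hSX : S * X = S * Y := by
    have := congrArg star hXS
    simpa [star_mul, hSsa, hX.isSelfAdjoint.star_eq, hY.isSelfAdjoint.star_eq] using this
  ext x
  have := congrArg (fun T : 𝓗 →L[ℂ] 𝓗 => T x) hSX
  simp only [ContinuousLinearMap.mul_apply] at this
  have h0 : S (X x - Y x) = 0 := by simp [map_sub, this]
  simpa [sub_eq_zero] using hSinj _ h0
end

section
/- Let 𝓗 be a complex Hilbert space and H, K positive bounded operators with H nonsingular. If the equation XHX = K has a positive bounded solution, then the range of (H^{1/2}KH^{1/2})^{1/4} is contained in the range of H^{1/2}. -/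
set_option synthInstance.maxHeartbeats 1000000
set_option maxHeartbeats 1000000

open scoped InnerProductSpace

/-- If `T` is selfadjoint and `⟪y, ·⟫` is bounded by `c‖T ·‖`, then `y ∈ range T`. -/
theorem mem_range_of_inner_bound {𝓗 : Type*} [NormedAddCommGroup 𝓗] [InnerProductSpace ℂ 𝓗]
    [CompleteSpace 𝓗] (T : 𝓗 →L[ℂ] 𝓗) (hT : IsSelfAdjoint T) (y : 𝓗) (c : ℝ)
    (hc : 0 ≤ c) (hb : ∀ x : 𝓗, ‖(⟪y, x⟫_ℂ)‖ ≤ c * ‖T x‖) : y ∈ Set.range T := by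
  set p : Submodule ℂ 𝓗 := LinearMap.range (T : 𝓗 →ₗ[ℂ] 𝓗) with hp
  have key : ∀ x x' : 𝓗, T x = T x' → ⟪y, x⟫_ℂ = ⟪y, x'⟫_ℂ := by
    intro x x' h
    have h0 : ‖(⟪y, x - x'⟫_ℂ)‖ ≤ c * ‖T (x - x')‖ := hb _
    rw [map_sub, h, sub_self, norm_zero, mul_zero, norm_le_zero_iff] at h0
    rw [inner_sub_right] at h0
    exact sub_eq_zero.mp h0
  have sec : ∀ z : p, ∃ x : 𝓗, T x = (z : 𝓗) := fun z => z.2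
  choose s hs using sec
  let g₀ : p →ₗ[ℂ] ℂ :=
    { toFun := fun z => ⟪y, s z⟫_ℂ
      map_add' := by
        intro z w
        show ⟪y, s (z + w)⟫_ℂ = ⟪y, s z⟫_ℂ + ⟪y, s w⟫_ℂ
        have : T (s (z + w)) = T (s z + s w) := by
          rw [map_add, hs, hs, hs]; rfl
        rw [key _ _ this, inner_add_right]
      map_smul' := by
        intro m z
        show ⟪y, s (m • z)⟫_ℂ = m • ⟪y, s z⟫_ℂ
        have : T (s (m • z)) = T (m • s z) := by
          rw [map_smul, hs, hs]; rfl
        rw [key _ _ this, inner_smul_right]; rfl }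
  have hg₀ : ∀ z : p, g₀ z = ⟪y, s z⟫_ℂ := fun z => rfl
  have hbd : ∀ z : p, ‖g₀ z‖ ≤ c * ‖z‖ := by
    intro z
    rw [hg₀]
    calc ‖(⟪y, s z⟫_ℂ)‖ ≤ c * ‖T (s z)‖ := hb _
      _ = c * ‖z‖ := by rw [hs]; rfl
  set G : p →L[ℂ] ℂ := g₀.mkContinuous c hbd with hG
  obtain ⟨g, hg, -⟩ := exists_extension_norm_eq p G
  set v : 𝓗 := (InnerProductSpace.toDual ℂ 𝓗).symm g with hv
  have hvx : ∀ x : 𝓗, ⟪v, x⟫_ℂ = g x := fun x => InnerProductSpace.toDual_symm_apply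
  refine ⟨v, ?_⟩
  apply ext_inner_right ℂ
  intro x
  have hTx : T x ∈ p := ⟨x, rfl⟩
  have h1 : g (T x) = ⟪y, x⟫_ℂ := by
    rw [hg ⟨T x, hTx⟩]
    have : G ⟨T x, hTx⟩ = ⟪y, s ⟨T x, hTx⟩⟫_ℂ := rfl
    rw [this]
    exact key _ _ (by rw [hs])
  calc ⟪T v, x⟫_ℂ = ⟪v, T x⟫_ℂ := hT.isSymmetric v x
    _ = g (T x) := hvx _
    _ = ⟪y, x⟫_ℂ := h1

/-- If `XHX = K` has a positive solution (`H, K` positive, `H` injective), then the range of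
`(H^{1/2} K H^{1/2})^{1/4}` is contained in the range of `H^{1/2}`. -/
theorem stmt_3 {𝓗 : Type*} [NormedAddCommGroup 𝓗] [InnerProductSpace ℂ 𝓗] [CompleteSpace 𝓗]
    (H K : 𝓗 →L[ℂ] 𝓗) (hH : 0 ≤ H) (hK : 0 ≤ K)
    (hHns : Function.Injective (H : 𝓗 → 𝓗))
    (hsol : ∃ X : 𝓗 →L[ℂ] 𝓗, 0 ≤ X ∧ X * H * X = K) :
    Set.range ⇑(CFC.sqrt (CFC.sqrt (CFC.sqrt H * K * CFC.sqrt H))) ⊆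
      Set.range ⇑(CFC.sqrt H) := by
  obtain ⟨X, hX, hXK⟩ := hsol
  set T : 𝓗 →L[ℂ] 𝓗 := CFC.sqrt H with hTdef
  have hTnn : (0 : 𝓗 →L[ℂ] 𝓗) ≤ T := CFC.sqrt_nonneg H
  have hTsa : IsSelfAdjoint T := .of_nonneg hTnn
  have hT2 : T * T = H := CFC.sqrt_mul_sqrt_self H hH
  set A : 𝓗 →L[ℂ] 𝓗 := T * X * T with hAdef
  have hAnn : (0 : 𝓗 →L[ℂ] 𝓗) ≤ A := by
    have := star_left_conjugate_nonneg hX T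
    rwa [hTsa.star_eq] at this
  have hTKT : T * K * T = A * A := by
    rw [← hXK, ← hT2, hAdef]
    simp only [mul_assoc]
  have hsqrtA : CFC.sqrt (T * K * T) = A := by
    rw [hTKT, CFC.sqrt_mul_self A hAnn]
  rw [hsqrtA]
  set S : 𝓗 →L[ℂ] 𝓗 := CFC.sqrt A with hSdef
  have hSnn : (0 : 𝓗 →L[ℂ] 𝓗) ≤ S := CFC.sqrt_nonneg A
  have hSsa : IsSelfAdjoint S := .of_nonneg hSnn
  have hS2 : S * S = A := CFC.sqrt_mul_sqrt_self A hAnn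
  -- key norm inequality : ‖S x‖ ≤ √‖X‖ * ‖T x‖
  have hnorm : ∀ x : 𝓗, ‖S x‖ ≤ Real.sqrt ‖X‖ * ‖T x‖ := by
    intro x
    have hsq : ‖S x‖ ^ 2 ≤ ‖X‖ * ‖T x‖ ^ 2 := by
      have h1 : (⟪S x, S x⟫_ℂ) = ⟪X (T x), T x⟫_ℂ := by
        calc (⟪S x, S x⟫_ℂ) = ⟪S (S x), x⟫_ℂ := (hSsa.isSymmetric (S x) x).symm
          _ = ⟪(S * S) x, x⟫_ℂ := by rfl
          _ = ⟪A x, x⟫_ℂ := by rw [hS2]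
          _ = ⟪T (X (T x)), x⟫_ℂ := by rfl
          _ = ⟪X (T x), T x⟫_ℂ := hTsa.isSymmetric _ x
      have h2 : ‖S x‖ ^ 2 = ‖(⟪S x, S x⟫_ℂ)‖ := by
        rw [inner_self_eq_norm_sq_to_K]
        simp
      rw [h2, h1]
      calc ‖(⟪X (T x), T x⟫_ℂ)‖ ≤ ‖X (T x)‖ * ‖T x‖ := norm_inner_le_norm _ _
        _ ≤ (‖X‖ * ‖T x‖) * ‖T x‖ :=
            mul_le_mul_of_nonneg_right (X.le_opNorm _) (norm_nonneg _)
        _ = ‖X‖ * ‖T x‖ ^ 2 := by ring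
    have h3 : ‖S x‖ = Real.sqrt (‖S x‖ ^ 2) := (Real.sqrt_sq (norm_nonneg _)).symm
    rw [h3]
    calc Real.sqrt (‖S x‖ ^ 2) ≤ Real.sqrt (‖X‖ * ‖T x‖ ^ 2) := Real.sqrt_le_sqrt hsq
      _ = Real.sqrt ‖X‖ * ‖T x‖ := by
          rw [Real.sqrt_mul (norm_nonneg _), Real.sqrt_sq (norm_nonneg _)]
  rintro y ⟨u, rfl⟩
  refine mem_range_of_inner_bound T hTsa (S u) (‖u‖ * Real.sqrt ‖X‖)
    (mul_nonneg (norm_nonneg _) (Real.sqrt_nonneg _)) ?_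
  intro x
  have hsym : (⟪S u, x⟫_ℂ) = ⟪u, S x⟫_ℂ := hSsa.isSymmetric u x
  calc ‖(⟪S u, x⟫_ℂ)‖ = ‖(⟪u, S x⟫_ℂ)‖ := by rw [hsym]
    _ ≤ ‖u‖ * ‖S x‖ := norm_inner_le_norm _ _
    _ ≤ ‖u‖ * (Real.sqrt ‖X‖ * ‖T x‖) :=
        mul_le_mul_of_nonneg_left (hnorm x) (norm_nonneg _)
    _ = ‖u‖ * Real.sqrt ‖X‖ * ‖T x‖ := by ring
end

section
/- Let 𝓗 be a complex Hilbert space and H, K positive bounded operators with H nonsingular. If the range of (H^{1/2}KH^{1/2})^{1/4} is contained in the range of H^{1/2}, then the equation XHX = K has a positive bounded solution. -/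
set_option synthInstance.maxHeartbeats 1000000
set_option maxHeartbeats 1000000

/-- If the range of `(H^{1/2} K H^{1/2})^{1/4}` is contained in the range of `H^{1/2}`
(`H, K` positive, `H` injective with dense range), then `XHX = K` has a positive solution. -/
theorem stmt_4 {𝓗 : Type*} [NormedAddCommGroup 𝓗] [InnerProductSpace ℂ 𝓗] [CompleteSpace 𝓗]
    (H K : 𝓗 →L[ℂ] 𝓗) (hH : 0 ≤ H) (hK : 0 ≤ K)
    (hHinj : Function.Injective (H : 𝓗 → 𝓗)) (hHdr : DenseRange (H : 𝓗 → 𝓗))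
    (hr : Set.range ⇑(CFC.sqrt (CFC.sqrt (CFC.sqrt H * K * CFC.sqrt H))) ⊆
      Set.range ⇑(CFC.sqrt H)) :
    ∃ X : 𝓗 →L[ℂ] 𝓗, 0 ≤ X ∧ X * H * X = K := by
  set B : 𝓗 →L[ℂ] 𝓗 := CFC.sqrt H with hBdef
  set A : 𝓗 →L[ℂ] 𝓗 := CFC.sqrt (CFC.sqrt (B * K * B)) with hAdef
  have hBnn : 0 ≤ B := CFC.sqrt_nonneg _
  have hBB : B * B = H := CFC.sqrt_mul_sqrt_self H hH
  have hBKB : 0 ≤ B * K * B := (IsSelfAdjoint.of_nonneg hBnn).conjugate_nonneg hK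
  have hSnn : 0 ≤ CFC.sqrt (B * K * B) := CFC.sqrt_nonneg _
  have hAnn : 0 ≤ A := CFC.sqrt_nonneg _
  have hAA : A * A = CFC.sqrt (B * K * B) := CFC.sqrt_mul_sqrt_self _ hSnn
  have hSS : CFC.sqrt (B * K * B) * CFC.sqrt (B * K * B) = B * K * B :=
    CFC.sqrt_mul_sqrt_self _ hBKB
  -- B is injective
  have hBinj : Function.Injective (B : 𝓗 → 𝓗) := by
    intro x y hxy
    apply hHinj
    have : (B * B) x = (B * B) y := by
      simp only [ContinuousLinearMap.mul_apply, hxy]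
    rwa [hBB] at this
  -- B has dense range
  have hBdr : DenseRange (B : 𝓗 → 𝓗) := by
    have hsub : Set.range (H : 𝓗 → 𝓗) ⊆ Set.range (B : 𝓗 → 𝓗) := by
      rintro _ ⟨x, rfl⟩
      exact ⟨B x, by rw [← hBB]; rfl⟩
    exact hHdr.mono hsub
  -- Douglas factorization: A = B * C for some bounded C
  have hfac : ∀ x : 𝓗, ∃ y : 𝓗, B y = A x := fun x => hr ⟨x, rfl⟩
  choose f hf using hfac
  have hfadd : ∀ x y, f (x + y) = f x + f y := by
    intro x y
    apply hBinj
    rw [map_add, hf, hf, hf, map_add]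
  have hfsmul : ∀ (c : ℂ) (x : 𝓗), f (c • x) = c • f x := by
    intro c x
    apply hBinj
    rw [map_smul, hf, hf, map_smul]
  set C₀ : 𝓗 →ₗ[ℂ] 𝓗 :=
    { toFun := f, map_add' := hfadd, map_smul' := hfsmul } with hC₀def
  have hgraph : IsClosed (C₀.graph : Set (𝓗 × 𝓗)) := by
    have heq : (C₀.graph : Set (𝓗 × 𝓗)) = {p : 𝓗 × 𝓗 | B p.2 = A p.1} := by
      ext p
      constructor
      · intro hp
        have hp' : p.2 = C₀ p.1 := (LinearMap.mem_graph_iff _ _).mp hp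
        simp only [Set.mem_setOf_eq, hp']
        exact hf p.1
      · intro hp
        refine (LinearMap.mem_graph_iff _ _).mpr ?_
        apply hBinj
        exact (hf p.1).trans hp.symm |>.symm
    rw [heq]
    exact isClosed_eq (B.continuous.comp continuous_snd) (A.continuous.comp continuous_fst)
  set C : 𝓗 →L[ℂ] 𝓗 := ContinuousLinearMap.ofIsClosedGraph hgraph with hCdef
  have hBC : B * C = A := by
    ext x
    exact hf x
  set X : 𝓗 →L[ℂ] 𝓗 := C * star C with hXdef
  refine ⟨X, mul_star_self_nonneg C, ?_⟩
  have hAsa : star A = A := (IsSelfAdjoint.of_nonneg hAnn)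
  have hBsa : star B = B := (IsSelfAdjoint.of_nonneg hBnn)
  have hBXB : B * X * B = CFC.sqrt (B * K * B) := by
    have : B * X * B = (B * C) * star (B * C) := by
      rw [star_mul, hBsa, hXdef]; noncomm_ring
    rw [this, hBC, hAsa, hAA]
  have key : B * (X * H * X) * B = B * K * B := by
    have h1 : B * (X * H * X) * B = (B * X * B) * (B * X * B) := by
      rw [← hBB]; noncomm_ring
    rw [h1, hBXB, hSS]
  -- cancellation
  have h2 : (X * H * X) * B = K * B := by
    ext x
    apply hBinj
    have := congrArg (fun T : 𝓗 →L[ℂ] 𝓗 => T x) key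
    simpa [ContinuousLinearMap.mul_apply] using this
  ext x
  have heqon : Set.EqOn ⇑(X * H * X) ⇑K (Set.range (B : 𝓗 → 𝓗)) := by
    rintro _ ⟨y, rfl⟩
    have := congrArg (fun T : 𝓗 →L[ℂ] 𝓗 => T y) h2
    simpa [ContinuousLinearMap.mul_apply] using this
  have := Continuous.ext_on hBdr (X * H * X).continuous K.continuous heqon
  exact congrFun this x
end

section
/- Let 𝓗 be a complex Hilbert space and H, K positive bounded operators with H nonsingular. Then XHX = K has a positive bounded solution if and only if the range of (H^{1/2}KH^{1/2})^{1/2} is contained in the range of H^{1/2} and (H^{1/2}KH^{1/2})^{1/2} ≤ λH for some scalar λ > 0. -/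
set_option synthInstance.maxHeartbeats 1000000
set_option maxHeartbeats 1000000

open scoped InnerProductSpace

/-- For positive `H, K` with `H` nonsingular (injective), `XHX = K` has a positive solution iff
the range of `(H^{1/2} K H^{1/2})^{1/2}` is contained in the range of `H^{1/2}` and
`(H^{1/2} K H^{1/2})^{1/2} ≤ λ • H` for some `λ > 0`. -/
theorem stmt_5 {𝓗 : Type*} [NormedAddCommGroup 𝓗] [InnerProductSpace ℂ 𝓗] [CompleteSpace 𝓗]
    (H K : 𝓗 →L[ℂ] 𝓗) (hH : 0 ≤ H) (hK : 0 ≤ K)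
    (hHns : Function.Injective (H : 𝓗 → 𝓗)) :
    (∃ X : 𝓗 →L[ℂ] 𝓗, 0 ≤ X ∧ X * H * X = K) ↔
      (Set.range ⇑(CFC.sqrt (CFC.sqrt H * K * CFC.sqrt H)) ⊆
        Set.range ⇑(CFC.sqrt H) ∧
      ∃ lam : ℝ, 0 < lam ∧ CFC.sqrt (CFC.sqrt H * K * CFC.sqrt H) ≤ lam • H) := by
  set S := CFC.sqrt H with hSdef
  have hS : (0:𝓗 →L[ℂ] 𝓗) ≤ S := CFC.sqrt_nonneg _
  have hSS : S * S = H := CFC.sqrt_mul_sqrt_self H hH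
  have hSsa : IsSelfAdjoint S := .of_nonneg hS
  have hSinj : Function.Injective (⇑S) := by
    intro x y hxy
    apply hHns
    show H x = H y
    rw [← hSS]
    show S (S x) = S (S y)
    rw [hxy]
  have hSKS : (0:𝓗 →L[ℂ] 𝓗) ≤ S * K * S := hSsa.conjugate_nonneg hK
  set A := CFC.sqrt (S * K * S) with hAdef
  have hA : (0:𝓗 →L[ℂ] 𝓗) ≤ A := CFC.sqrt_nonneg _
  have hAA : A * A = S * K * S := CFC.sqrt_mul_sqrt_self _ hSKS
  have hAsa : IsSelfAdjoint A := .of_nonneg hA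
  have hsym : ∀ (T : 𝓗 →L[ℂ] 𝓗), IsSelfAdjoint T → ∀ x y : 𝓗, ⟪T x, y⟫_ℂ = ⟪x, T y⟫_ℂ := by
    intro T hT x y
    rw [← ContinuousLinearMap.adjoint_inner_left, ← ContinuousLinearMap.star_eq_adjoint,
      hT.star_eq]
  constructor
  · rintro ⟨X, hX, hXHX⟩
    have hXsa : IsSelfAdjoint X := .of_nonneg hX
    have hT : (0:𝓗 →L[ℂ] 𝓗) ≤ S * X * S := hSsa.conjugate_nonneg hX
    have hTT : (S * X * S) * (S * X * S) = S * K * S := by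
      have h : (S * X * S) * (S * X * S) = S * (X * (S * S) * X) * S := by
        simp only [mul_assoc]
      rw [h, hSS, hXHX]
    have hAT : A = S * X * S := CFC.sqrt_unique hTT hT
    refine ⟨?_, ‖X‖ + 1, by positivity, ?_⟩
    · rw [hAT]
      rintro y ⟨x, rfl⟩
      exact ⟨X (S x), rfl⟩
    · have h1 : X ≤ algebraMap ℝ _ ‖X‖ := hXsa.le_algebraMap_norm_self
      have h2 : S * X * S ≤ S * algebraMap ℝ _ ‖X‖ * S := by
        have h := star_left_conjugate_le_conjugate h1 S
        rwa [hSsa.star_eq] at h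
      have h3 : S * algebraMap ℝ (𝓗 →L[ℂ] 𝓗) ‖X‖ * S = ‖X‖ • H := by
        rw [Algebra.algebraMap_eq_smul_one, mul_smul_comm, mul_one, smul_mul_assoc, hSS]
      have h4 : ‖X‖ • H ≤ (‖X‖ + 1) • H := by
        rw [add_smul, one_smul]
        exact le_add_of_nonneg_right hH
      rw [hAT]
      exact le_trans (h3 ▸ h2) h4
  · rintro ⟨-, lam, hlam, hle⟩
    set R := CFC.sqrt A with hRdef
    have hR : (0:𝓗 →L[ℂ] 𝓗) ≤ R := CFC.sqrt_nonneg _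
    have hRR : R * R = A := CFC.sqrt_mul_sqrt_self A hA
    have hRsa : IsSelfAdjoint R := .of_nonneg hR
    -- the key norm estimate
    have key : ∀ x : 𝓗, ‖R x‖ ≤ Real.sqrt lam * ‖S x‖ := by
      intro x
      have h1 : ‖R x‖ ^ 2 = RCLike.re ⟪A x, x⟫_ℂ := by
        rw [← hRR]
        have h : ⟪(R * R) x, x⟫_ℂ = ⟪R x, R x⟫_ℂ := by
          rw [ContinuousLinearMap.mul_apply, ← hsym R hRsa (R x) x]
        rw [h, inner_self_eq_norm_sq]
      have h2 : ‖S x‖ ^ 2 = RCLike.re ⟪H x, x⟫_ℂ := by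
        rw [← hSS]
        have h : ⟪(S * S) x, x⟫_ℂ = ⟪S x, S x⟫_ℂ := by
          rw [ContinuousLinearMap.mul_apply, ← hsym S hSsa (S x) x]
        rw [h, inner_self_eq_norm_sq]
      have h3 : RCLike.re ⟪A x, x⟫_ℂ ≤ lam * RCLike.re ⟪H x, x⟫_ℂ := by
        have hpos := (ContinuousLinearMap.nonneg_iff_isPositive _).mp
          (sub_nonneg.mpr hle)
        have h := hpos.inner_nonneg_left x
        have hexp : (lam • H - A) x = (lam : ℂ) • H x - A x := by
          simp [ContinuousLinearMap.sub_apply, ContinuousLinearMap.smul_apply,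
            Complex.coe_smul]
        rw [hexp, inner_sub_left, inner_smul_left] at h
        have h' := (Complex.le_def.mp h).1
        simp only [Complex.zero_re, Complex.sub_re, Complex.conj_ofReal, Complex.re_ofReal_mul] at h'
        simp only [RCLike.re_to_complex]
        linarith
      have h4 : ‖R x‖ ^ 2 ≤ lam * ‖S x‖ ^ 2 := by rw [h1, h2]; exact h3
      calc ‖R x‖ = Real.sqrt (‖R x‖ ^ 2) := by rw [Real.sqrt_sq (norm_nonneg _)]
        _ ≤ Real.sqrt (lam * ‖S x‖ ^ 2) := Real.sqrt_le_sqrt h4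
        _ = Real.sqrt lam * ‖S x‖ := by
            rw [Real.sqrt_mul hlam.le, Real.sqrt_sq (norm_nonneg _)]
    -- the dense submodule
    set p : Submodule ℂ 𝓗 := LinearMap.range (S : 𝓗 →ₗ[ℂ] 𝓗) with hpdef
    have hporth : pᗮ = ⊥ := by
      rw [Submodule.eq_bot_iff]
      intro x hx
      rw [Submodule.mem_orthogonal] at hx
      have h1 : ⟪S (S x), x⟫_ℂ = 0 := hx (S (S x)) ⟨S x, rfl⟩
      have h2 : ⟪S x, S x⟫_ℂ = 0 := by
        rwa [hsym S hSsa (S x) x] at h1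
      have h3 : S x = 0 := by
        rwa [inner_self_eq_zero] at h2
      apply hSinj
      rw [h3, map_zero]
    have hpdense : Dense (p : Set 𝓗) := by
      rw [Submodule.dense_iff_topologicalClosure_eq_top]
      rw [Submodule.topologicalClosure_eq_top_iff]
      exact hporth
    have hSdense : DenseRange (⇑S) := by
      have : (p : Set 𝓗) = Set.range ⇑S := by
        ext y; simp [hpdef, LinearMap.mem_range, Set.mem_range]
      rwa [this] at hpdense
    -- construct the contraction C with C ∘ S = R
    have hSinj' : Function.Injective (⇑(S : 𝓗 →ₗ[ℂ] 𝓗)) := hSinj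
    set eqv := LinearEquiv.ofInjective (S : 𝓗 →ₗ[ℂ] 𝓗) hSinj' with heqv
    have heqv_apply : ∀ x : 𝓗, ((eqv x : p) : 𝓗) = S x := fun x => rfl
    set f₀ : p →ₗ[ℂ] 𝓗 := (R : 𝓗 →ₗ[ℂ] 𝓗) ∘ₗ (eqv.symm : p →ₗ[ℂ] 𝓗) with hf₀
    have hbound : ∀ v : p, ‖f₀ v‖ ≤ Real.sqrt lam * ‖v‖ := by
      intro v
      have hv : (v : 𝓗) = S (eqv.symm v) := by
        conv_lhs => rw [← eqv.apply_symm_apply v]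
        exact heqv_apply _
      have hnv : ‖v‖ = ‖S (eqv.symm v)‖ := by rw [← hv]; rfl
      have : f₀ v = R (eqv.symm v) := rfl
      rw [this, hnv]
      exact key _
    set f : p →L[ℂ] 𝓗 := LinearMap.mkContinuous f₀ (Real.sqrt lam) hbound with hf
    have h_e : IsUniformInducing (⇑p.subtypeL) := by
      have : Isometry (⇑p.subtypeL) := isometry_subtype_coe
      exact this.isUniformInducing
    have h_dense : DenseRange (⇑p.subtypeL) := by
      have : Set.range (⇑p.subtypeL) = (p : Set 𝓗) := Subtype.range_coe
      rw [DenseRange, this]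
      exact hpdense
    set C := f.extend p.subtypeL with hC
    have hCS : ∀ x : 𝓗, C (S x) = R x := by
      intro x
      have h := ContinuousLinearMap.extend_eq (f := f) (e := p.subtypeL) h_dense h_e (eqv x)
      have h1 : p.subtypeL (eqv x) = S x := heqv_apply x
      have h2 : f (eqv x) = R x := by
        show f₀ (eqv x) = R x
        show R (eqv.symm (eqv x)) = R x
        rw [eqv.symm_apply_apply]
      rw [h1, h2] at h
      exact h
    have hCSmul : C * S = R := by
      ext x
      exact hCS x
    have hSC : S * star C = R := by
      have h := congrArg star hCSmul
      rwa [star_mul, hSsa.star_eq, hRsa.star_eq] at h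
    refine ⟨star C * C, star_mul_self_nonneg C, ?_⟩
    have h5 : S * (star C * C * H * (star C * C)) * S = S * K * S := by
      have h : S * (star C * C * H * (star C * C)) * S
          = ((S * star C) * (C * S)) * ((S * star C) * (C * S)) := by
        rw [← hSS]; simp only [mul_assoc]
      rw [h, hSC, hCSmul, hRR, hAA]
    have h6 : ∀ x : 𝓗, (star C * C * H * (star C * C)) (S x) = K (S x) := by
      intro x
      apply hSinj
      have h := congrArg (fun T : 𝓗 →L[ℂ] 𝓗 => T x) h5
      simpa [ContinuousLinearMap.mul_apply] using h
    have h7 : ⇑(star C * C * H * (star C * C)) = ⇑K :=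
      hSdense.equalizer (star C * C * H * (star C * C)).continuous K.continuous
        (funext h6)
    ext x
    exact congrFun h7 x
end

section
/- Let 𝓗 be a complex Hilbert space and H, K positive bounded operators. If K ≤ a²H for some a > 0 and H is nonsingular, then (H^{1/2}KH^{1/2})^{1/2} ≤ aH. -/
set_option synthInstance.maxHeartbeats 1000000
set_option maxHeartbeats 1000000

open scoped NNReal ENNReal

section Aux

variable {A : Type*} [CStarAlgebra A] [PartialOrder A] [StarOrderedRing A]

lemma aux_spectralRadius_mul_comm (a b : A) :
    spectralRadius ℂ (a * b) = spectralRadius ℂ (b * a) := by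
  have key : ∀ x y : A, spectralRadius ℂ (x * y) ≤ spectralRadius ℂ (y * x) := by
    intro x y
    rw [spectralRadius, spectralRadius]
    refine iSup₂_le fun k hk => ?_
    rcases eq_or_ne k 0 with rfl | hk0
    · simp
    · have hk' : k ∈ spectrum ℂ (y * x) := by
        have hmem : k ∈ spectrum ℂ (x * y) \ {0} := ⟨hk, hk0⟩
        rw [spectrum.nonzero_mul_comm x y] at hmem
        exact hmem.1
      exact le_iSup₂ (f := fun k (_ : k ∈ spectrum ℂ (y * x)) => (‖k‖₊ : ℝ≥0∞)) k hk'
  exact le_antisymm (key a b) (key b a)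

lemma aux_sqrt_le_of_le_sq_of_isUnit {a b : A} (ha : 0 ≤ a) (hb : 0 ≤ b)
    (hbu : IsUnit b) (h : a ≤ b ^ 2) : CFC.sqrt a ≤ b := by
  rcases subsingleton_or_nontrivial A with hA | hA
  · exact le_of_eq (Subsingleton.elim _ _)
  lift b to Aˣ using hbu
  have hbinv : (0 : A) ≤ ↑b⁻¹ := CFC.inv_nonneg_of_nonneg b hb
  rw [le_iff_norm_sqrt_mul_sqrt_inv (CFC.sqrt_nonneg _) hb]
  set s : A := CFC.sqrt a with hs
  have hs0 : 0 ≤ s := CFC.sqrt_nonneg (a := a)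
  set q : A := CFC.sqrt s with hq
  have hq0 : 0 ≤ q := CFC.sqrt_nonneg (a := s)
  set y : A := CFC.sqrt (↑b⁻¹ : A) with hy
  have hy0 : 0 ≤ y := CFC.sqrt_nonneg (a := (↑b⁻¹ : A))
  have hqsa : IsSelfAdjoint q := .of_nonneg hq0
  have hysa : IsSelfAdjoint y := .of_nonneg hy0
  have hssa : IsSelfAdjoint s := .of_nonneg hs0
  have hbisa : IsSelfAdjoint (↑b⁻¹ : A) := .of_nonneg hbinv
  -- first : ‖s * b⁻¹‖ ≤ 1
  have h1 : ‖s * (↑b⁻¹ : A)‖ ≤ 1 := by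
    have hconj : (↑b⁻¹ : A) * a * ↑b⁻¹ ≤ 1 := by
      have := hbisa.conjugate_le_conjugate h
      calc (↑b⁻¹ : A) * a * ↑b⁻¹ ≤ ↑b⁻¹ * b ^ 2 * ↑b⁻¹ := this
        _ = 1 := by
          rw [sq, ← mul_assoc, mul_assoc ((↑b⁻¹ : A) * b)]
          simp
    have hconj0 : (0 : A) ≤ (↑b⁻¹ : A) * a * ↑b⁻¹ := by
      simpa [hbisa.star_eq] using star_left_conjugate_nonneg ha (↑b⁻¹ : A)
    have hnorm : ‖(↑b⁻¹ : A) * a * ↑b⁻¹‖ ≤ 1 :=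
      (CStarAlgebra.norm_le_one_iff_of_nonneg _ hconj0).mpr hconj
    have : ‖s * (↑b⁻¹ : A)‖ ^ 2 = ‖(↑b⁻¹ : A) * a * ↑b⁻¹‖ := by
      rw [sq, ← CStarRing.norm_star_mul_self, star_mul, hssa.star_eq, hbisa.star_eq]
      congr 1
      calc (↑b⁻¹ : A) * s * (s * ↑b⁻¹) = ↑b⁻¹ * (s * s) * ↑b⁻¹ := by
            simp only [mul_assoc]
        _ = (↑b⁻¹ : A) * a * ↑b⁻¹ := by rw [CFC.sqrt_mul_sqrt_self a ha]
    nlinarith [norm_nonneg (s * (↑b⁻¹ : A)), this ▸ hnorm]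
  -- spectral radius argument : ‖y * s * y‖ ≤ 1
  have h2 : ‖y * s * y‖ ≤ 1 := by
    have hysy0 : (0 : A) ≤ y * s * y := by
      simpa [hysa.star_eq] using star_left_conjugate_nonneg hs0 y
    have hysysa : IsSelfAdjoint (y * s * y) := .of_nonneg hysy0
    have hr1 : spectralRadius ℂ (y * s * y) = spectralRadius ℂ (s * (↑b⁻¹ : A)) := by
      calc spectralRadius ℂ ((y * s) * y) = spectralRadius ℂ (y * (y * s)) :=
            aux_spectralRadius_mul_comm _ _
        _ = spectralRadius ℂ ((y * y) * s) := by rw [← mul_assoc]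
        _ = spectralRadius ℂ ((↑b⁻¹ : A) * s) := by
            rw [CFC.sqrt_mul_sqrt_self _ hbinv]
        _ = spectralRadius ℂ (s * (↑b⁻¹ : A)) := aux_spectralRadius_mul_comm _ _
    have : (‖y * s * y‖₊ : ℝ≥0∞) ≤ ‖s * (↑b⁻¹ : A)‖₊ := by
      rw [← hysysa.spectralRadius_eq_nnnorm, hr1]
      exact spectrum.spectralRadius_le_nnnorm _
    have h2' : ‖y * s * y‖₊ ≤ ‖s * (↑b⁻¹ : A)‖₊ := by exact_mod_cast this
    calc ‖y * s * y‖ ≤ ‖s * (↑b⁻¹ : A)‖ := h2'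
      _ ≤ 1 := h1
  -- conclude : ‖q * y‖ ≤ 1
  have h3 : ‖q * y‖ ^ 2 = ‖y * s * y‖ := by
    rw [sq, ← CStarRing.norm_star_mul_self, star_mul, hqsa.star_eq, hysa.star_eq]
    congr 1
    calc y * q * (q * y) = y * (q * q) * y := by simp only [mul_assoc]
      _ = y * s * y := by rw [CFC.sqrt_mul_sqrt_self s hs0]
  nlinarith [norm_nonneg (q * y), h3 ▸ h2]

lemma aux_sqrt_le_of_le_sq {a b : A} (ha : 0 ≤ a) (hb : 0 ≤ b)
    (h : a ≤ b ^ 2) : CFC.sqrt a ≤ b := by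
  have key : ∀ ε : ℝ, 0 < ε → CFC.sqrt a ≤ b + ε • 1 := by
    intro ε hε
    have hb' : (0 : A) ≤ b + ε • 1 := by
      have : (0 : A) ≤ ε • 1 := smul_nonneg hε.le zero_le_one
      exact add_nonneg hb this
    have hbu : IsUnit (b + ε • 1) := by
      have hmem : -ε ∉ spectrum ℝ b := fun hc =>
        absurd (spectrum_nonneg_of_nonneg hb hc) (by linarith)
      rw [spectrum.notMem_iff] at hmem
      have : algebraMap ℝ A (-ε) - b = -(b + ε • 1) := by
        rw [Algebra.algebraMap_eq_smul_one]
        module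
      rw [this] at hmem
      exact (IsUnit.neg_iff _).mp hmem
    have hsq : a ≤ (b + ε • 1) ^ 2 := by
      refine h.trans ?_
      have hexp : (b + ε • 1) ^ 2 = b ^ 2 + ((2 * ε) • b + (ε ^ 2) • 1) := by
        rw [sq, sq]
        simp only [add_mul, mul_add, mul_one, one_mul, smul_mul_assoc, mul_smul_comm,
          smul_smul]
        module
      rw [hexp]
      have : (0 : A) ≤ (2 * ε) • b + (ε ^ 2) • 1 :=
        add_nonneg (smul_nonneg (by linarith) hb)
          (smul_nonneg (by positivity) zero_le_one)
      exact le_add_of_nonneg_right this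
    exact aux_sqrt_le_of_le_sq_of_isUnit ha hb' hbu hsq
  have htend : Filter.Tendsto (fun ε : ℝ => b + ε • (1 : A)) (nhdsWithin 0 (Set.Ioi 0))
      (nhds b) := by
    have : Filter.Tendsto (fun ε : ℝ => b + ε • (1 : A)) (nhds 0) (nhds (b + (0 : ℝ) • 1)) := by
      exact (tendsto_const_nhds.add ((continuous_id.smul continuous_const).tendsto 0))
    simpa using this.mono_left nhdsWithin_le_nhds
  refine ge_of_tendsto htend ?_
  filter_upwards [self_mem_nhdsWithin] with ε hε
  exact key ε hε

end Aux

/-- For positive `H, K` with `H` nonsingular, if `K ≤ a² • H` for some `a > 0`, then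
`(H^{1/2} K H^{1/2})^{1/2} ≤ a • H`. -/
theorem stmt_6 {𝓗 : Type*} [NormedAddCommGroup 𝓗] [InnerProductSpace ℂ 𝓗] [CompleteSpace 𝓗]
    (H K : 𝓗 →L[ℂ] 𝓗) (hH : 0 ≤ H) (hK : 0 ≤ K)
    (hHns : DenseRange (H : 𝓗 → 𝓗)) (a : ℝ) (ha : 0 < a) (hKH : K ≤ (a ^ 2) • H) :
    CFC.sqrt (CFC.sqrt H * K * CFC.sqrt H) ≤ a • H := by
  have hsH : (0 : 𝓗 →L[ℂ] 𝓗) ≤ CFC.sqrt H := CFC.sqrt_nonneg (a := H)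
  have hsHsa : IsSelfAdjoint (CFC.sqrt H) := .of_nonneg hsH
  have hS0 : (0 : 𝓗 →L[ℂ] 𝓗) ≤ CFC.sqrt H * K * CFC.sqrt H := by
    simpa [hsHsa.star_eq] using star_left_conjugate_nonneg hK (CFC.sqrt H)
  have haH : (0 : 𝓗 →L[ℂ] 𝓗) ≤ a • H := smul_nonneg ha.le hH
  refine aux_sqrt_le_of_le_sq hS0 haH ?_
  have hconj : CFC.sqrt H * K * CFC.sqrt H ≤ CFC.sqrt H * ((a ^ 2) • H) * CFC.sqrt H :=
    hsHsa.conjugate_le_conjugate hKH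
  have hHH : CFC.sqrt H * H * CFC.sqrt H = H * H := by
    set s := CFC.sqrt H with hsdef
    have h2 : s * s = H := CFC.sqrt_mul_sqrt_self H hH
    rw [← h2]
    noncomm_ring
  calc CFC.sqrt H * K * CFC.sqrt H ≤ CFC.sqrt H * ((a ^ 2) • H) * CFC.sqrt H := hconj
    _ = (a ^ 2) • (CFC.sqrt H * H * CFC.sqrt H) := by
        rw [mul_smul_comm, smul_mul_assoc]
    _ = (a • H) ^ 2 := by rw [hHH, smul_pow, sq, sq]
end

section
/- Let E be a Hilbert C*-module over a C*-algebra A, and let A, B be adjointable operators on E such that the closures of the ranges of A* and B* are orthogonally complemented submodules of E. If the range of B is contained in the range of A, then BB* ≤ λ AA* for some λ > 0 and the range of BB* is contained in the range of A. -/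
open scoped ComplexOrder

open scoped RightActions

/-- The Hilbert C⋆-module class as Mathlib stated it in December 2024 (right `A`-action, given as
`SMul Aᵐᵒᵖ E`); Mathlib's `CStarModule` now uses a left action with other axioms. -/
class CStarModuleRight (A E : Type*) [NonUnitalSemiring A] [StarRing A] [Module ℂ A]
    [AddCommGroup E] [Module ℂ E] [PartialOrder A] [SMul Aᵐᵒᵖ E] [Norm A] [Norm E]
    extends Inner A E where
  inner_add_right {x} {y} {z} : inner x (y + z) = inner x y + inner x z
  inner_self_nonneg {x} : 0 ≤ inner x x
  inner_self {x} : inner x x = 0 ↔ x = 0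
  inner_op_smul_right {a : A} {x y : E} : inner x (y <• a) = inner x y * a
  inner_smul_right_complex {z : ℂ} {x} {y} : inner x (z • y) = z • inner x y
  star_inner x y : star (inner x y) = inner y x
  norm_eq_sqrt_norm_inner_self x : ‖x‖ = √‖inner x x‖

/-- `S` is orthogonally complemented in the Hilbert C*-module `E`: every element of `E` splits
as a sum of an element of `S` and an element orthogonal to `S`. -/
def OrthoComplemented {A E : Type*} [NonUnitalCStarAlgebra A] [PartialOrder A]
    [StarOrderedRing A] [NormedAddCommGroup E] [NormedSpace ℂ E] [SMul Aᵐᵒᵖ E]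
    [CStarModuleRight A E] (S : Set E) : Prop :=
  ∀ x : E, ∃ m ∈ S, ∃ n : E, (∀ y ∈ S, inner (𝕜 := A) y n = 0) ∧ x = m + n

attribute [simp] CStarModuleRight.inner_add_right CStarModuleRight.star_inner
  CStarModuleRight.inner_op_smul_right CStarModuleRight.inner_smul_right_complex

namespace CStarModuleRight

section general

variable {A E : Type*} [NonUnitalRing A] [StarRing A] [AddCommGroup E] [Module ℂ A]
  [Module ℂ E] [PartialOrder A] [SMul Aᵐᵒᵖ E] [Norm A] [Norm E] [CStarModuleRight A E]

local notation "⟪" x ", " y "⟫" => inner A x y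

@[simp]
lemma inner_add_left {x y z : E} : ⟪x + y, z⟫ = ⟪x, z⟫ + ⟪y, z⟫ := by
  rw [← star_star (r := ⟪x + y, z⟫)]
  simp only [inner_add_right, star_add, star_inner]

@[simp]
lemma inner_op_smul_left {a : A} {x y : E} : ⟪x <• a, y⟫ = star a * ⟪x, y⟫ := by
  rw [← star_inner]; simp

variable [StarModule ℂ A]

@[simp]
lemma inner_smul_left_complex {z : ℂ} {x y : E} : ⟪z • x, y⟫ = star z • ⟪x, y⟫ := by
  rw [← star_inner]
  simp

@[simp]
lemma inner_smul_left_real {z : ℝ} {x y : E} : ⟪z • x, y⟫ = z • ⟪x, y⟫ := by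
  have h₁ : z • x = (z : ℂ) • x := by simp
  rw [h₁, ← star_inner, inner_smul_right_complex]
  simp

@[simp]
lemma inner_smul_right_real {z : ℝ} {x y : E} : ⟪x, z • y⟫ = z • ⟪x, y⟫ := by
  have h₁ : z • y = (z : ℂ) • y := by simp
  rw [h₁, ← star_inner, inner_smul_left_complex]
  simp

/-- The function `⟨x, y⟩ ↦ ⟪x, y⟫` bundled as a sesquilinear map. -/
def innerₛₗ : E →ₗ⋆[ℂ] E →ₗ[ℂ] A where
  toFun x := { toFun := fun y => ⟪x, y⟫
               map_add' := fun z y => by simp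
               map_smul' := fun z y => by simp }
  map_add' z y := by ext; simp
  map_smul' z y := by ext; simp

lemma innerₛₗ_apply {x y : E} : innerₛₗ x y = ⟪x, y⟫ := rfl

@[simp] lemma inner_zero_right {x : E} : ⟪x, 0⟫ = 0 := by simp [← innerₛₗ_apply]
@[simp] lemma inner_zero_left {x : E} : ⟪0, x⟫ = 0 := by simp [← innerₛₗ_apply]
@[simp] lemma inner_sub_right {x y z : E} : ⟪x, y - z⟫ = ⟪x, y⟫ - ⟪x, z⟫ := by
  simp [← innerₛₗ_apply]
@[simp] lemma inner_sub_left {x y z : E} : ⟪x - y, z⟫ = ⟪x, z⟫ - ⟪y, z⟫ := by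
  simp [← innerₛₗ_apply]

end general

section norm

variable {A E : Type*} [NonUnitalCStarAlgebra A] [PartialOrder A] [AddCommGroup E]
  [Module ℂ E] [SMul Aᵐᵒᵖ E] [Norm E] [CStarModuleRight A E]

local notation "⟪" x ", " y "⟫" => inner A x y

lemma norm_sq_eq {x : E} : ‖x‖ ^ 2 = ‖⟪x, x⟫‖ := by
  simp [norm_eq_sqrt_norm_inner_self (A := A)]

include A in
variable (A) in
lemma norm_nonneg' {x : E} : 0 ≤ ‖x‖ := by simp [norm_eq_sqrt_norm_inner_self (A := A)]

include A in
variable (A) in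
lemma norm_pos' {x : E} (hx : x ≠ 0) : 0 < ‖x‖ := by
  simp only [norm_eq_sqrt_norm_inner_self (A := A), Real.sqrt_pos, norm_pos_iff]
  intro H
  rw [inner_self] at H
  exact hx H

include A in
variable (A) in
lemma norm_zero' : ‖(0 : E)‖ = 0 := by simp [norm_eq_sqrt_norm_inner_self (A := A)]

variable [StarOrderedRing A]

lemma inner_mul_inner_swap_le {x y : E} : ⟪y, x⟫ * ⟪x, y⟫ ≤ ‖x‖ ^ 2 • ⟪y, y⟫ := by
  rcases eq_or_ne x 0 with h | h
  · simp [h, norm_zero' A (E := E)]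
  · have h₁ : ∀ (a : A),
        (0 : A) ≤ ‖x‖ ^ 2 • (star a * a) - ‖x‖ ^ 2 • (⟪y, x⟫ * a)
                  - ‖x‖ ^ 2 • (star a * ⟪x, y⟫) + ‖x‖ ^ 2 • (‖x‖ ^ 2 • ⟪y, y⟫) := fun a => by
      calc (0 : A) ≤ ⟪x <• a - ‖x‖ ^ 2 • y, x <• a - ‖x‖ ^ 2 • y⟫ := by
                      exact inner_self_nonneg
            _ = star a * ⟪x, x⟫ * a - ‖x‖ ^ 2 • (⟪y, x⟫ * a)
                  - ‖x‖ ^ 2 • (star a * ⟪x, y⟫) + ‖x‖ ^ 2 • (‖x‖ ^ 2 • ⟪y, y⟫) := by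
                      simp only [inner_sub_right, inner_op_smul_right, inner_sub_left,
                        inner_op_smul_left, inner_smul_left_real, sub_mul, smul_mul_assoc,
                        inner_smul_right_real, smul_sub, mul_assoc]
                      abel
            _ ≤ ‖x‖ ^ 2 • (star a * a) - ‖x‖ ^ 2 • (⟪y, x⟫ * a)
                  - ‖x‖ ^ 2 • (star a * ⟪x, y⟫) + ‖x‖ ^ 2 • (‖x‖ ^ 2 • ⟪y, y⟫) := by
                      gcongr
                      calc _ ≤ ‖⟪x, x⟫‖ • (star a * a) :=
                          CStarAlgebra.star_left_conjugate_le_norm_smul (star_inner x x)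
                        _ = (√‖⟪x, x⟫‖) ^ 2 • (star a * a) := by
                          rw [Real.sq_sqrt]
                          positivity
                        _ = ‖x‖ ^ 2 • (star a * a) := by rw [← norm_eq_sqrt_norm_inner_self]
    specialize h₁ ⟪x, y⟫
    simp only [star_inner, sub_self, zero_sub, le_neg_add_iff_add_le, add_zero] at h₁
    rwa [smul_le_smul_iff_of_pos_left (pow_pos (norm_pos' A h) _)] at h₁

variable (E) in
lemma norm_inner_le {x y : E} : ‖⟪x, y⟫‖ ≤ ‖x‖ * ‖y‖ := by
  have := calc ‖⟪x, y⟫‖ ^ 2 = ‖⟪y, x⟫ * ⟪x, y⟫‖ := by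
                rw [← star_inner x, CStarRing.norm_star_mul_self, pow_two]
    _ ≤ ‖‖x‖ ^ 2 • ⟪y, y⟫‖ := by
                refine CStarAlgebra.norm_le_norm_of_nonneg_of_le ?_ inner_mul_inner_swap_le
                rw [← star_inner x]
                exact star_mul_self_nonneg ⟪x, y⟫
    _ = ‖x‖ ^ 2 * ‖⟪y, y⟫‖ := by simp [norm_smul]
    _ = ‖x‖ ^ 2 * ‖y‖ ^ 2 := by
                simp only [norm_eq_sqrt_norm_inner_self (A := A), norm_nonneg, Real.sq_sqrt]
    _ = (‖x‖ * ‖y‖) ^ 2 := by simp only [mul_pow]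
  refine (pow_le_pow_iff_left₀ (norm_nonneg ⟪x, y⟫) ?_ (by simp)).mp this
  exact mul_nonneg (norm_nonneg' A) (norm_nonneg' A)

end norm

section NormedAddCommGroup

variable {A E : Type*} [NonUnitalCStarAlgebra A] [PartialOrder A] [StarOrderedRing A]
  [SMul Aᵐᵒᵖ E] [NormedAddCommGroup E] [NormedSpace ℂ E] [CStarModuleRight A E]

/-- The function `⟨x, y⟩ ↦ ⟪x, y⟫` bundled as a continuous sesquilinear map. -/
noncomputable def innerSL : E →L⋆[ℂ] E →L[ℂ] A :=
  LinearMap.mkContinuous₂ (innerₛₗ : E →ₗ⋆[ℂ] E →ₗ[ℂ] A) 1 <| fun x y => by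
    simp [innerₛₗ_apply, norm_inner_le E]

lemma innerSL_apply {x y : E} : innerSL x y = inner A x y := rfl

lemma continuous_inner : Continuous (fun x : E × E => inner A x.1 x.2) := by
  simp_rw [← innerSL_apply]
  fun_prop

end NormedAddCommGroup

end CStarModuleRight

section
variable {A E : Type*} [NonUnitalCStarAlgebra A] [PartialOrder A] [StarOrderedRing A]
    [NormedAddCommGroup E] [NormedSpace ℂ E] [SMul Aᵐᵒᵖ E] [CStarModuleRight A E] [CompleteSpace E]

local notation "⟪" x ", " y "⟫" => inner (𝕜 := A) x y

theorem sym_bound (Q : E →L[ℂ] E)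
    (hsym : ∀ a b : E, ⟪Q a, b⟫ = ⟪a, Q b⟫) (lam : ℝ)
    (hlam : ‖Q‖ ≤ lam) (hlam0 : 0 < lam) (a : E) :
    ⟪a, Q a⟫ ≤ (lam : ℂ) • ⟪a, a⟫ := by
  have hsmul_norm : ∀ (X : E →L[ℂ] E), ‖(2⁻¹ : ℂ) • X‖ = 2⁻¹ * ‖X‖ := by
    intro X
    have h1 : ‖(2⁻¹ : ℂ) • X‖ = ‖(2⁻¹:ℂ)‖ * ‖X‖ := norm_smul (2⁻¹:ℂ) X
    rw [h1]; norm_num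
  set Q' : E →L[ℂ] E := (lam⁻¹ : ℂ) • Q with hQ'def
  have hQ'sym : ∀ a b : E, ⟪Q' a, b⟫ = ⟪a, Q' b⟫ := by
    intro a b
    have h1 : Q' a = (lam⁻¹ : ℂ) • Q a := rfl
    have h2 : Q' b = (lam⁻¹ : ℂ) • Q b := rfl
    rw [h1, h2, CStarModuleRight.inner_smul_left_complex, CStarModuleRight.inner_smul_right_complex,
      hsym a b]
    congr 1
    simp [Complex.ext_iff]
  have hQ'norm : ‖Q'‖ ≤ 1 := by
    have h1 : ‖Q'‖ = ‖(lam⁻¹ : ℂ)‖ * ‖Q‖ := by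
      rw [hQ'def]; exact norm_smul ((lam:ℂ)⁻¹) Q
    have h2 : ‖((lam:ℂ))⁻¹‖ = lam⁻¹ := by
      rw [norm_inv, Complex.norm_real, Real.norm_eq_abs, abs_of_nonneg hlam0.le]
    rw [h1, h2, inv_mul_le_iff₀ hlam0, mul_one]
    exact hlam
  set R : ℕ → E →L[ℂ] E := fun n => Nat.rec 0 (fun _ Rn => (2⁻¹ : ℂ) • (Q' + Rn * Rn)) n
    with hRdef
  have hR0 : R 0 = 0 := rfl
  have hRstep : ∀ n, R (n+1) = (2⁻¹ : ℂ) • (Q' + R n * R n) := fun n => rfl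
  set r : ℕ → ℝ := fun n => Nat.rec 0 (fun _ rn => (1 + rn^2)/2) n with hrdef
  have hr0 : r 0 = 0 := rfl
  have hrstep : ∀ n, r (n+1) = (1 + (r n)^2)/2 := fun n => rfl
  have hr01 : ∀ n, 0 ≤ r n ∧ r n ≤ 1 := by
    intro n; induction n with
    | zero => norm_num [hr0]
    | succ n ih => rw [hrstep]; constructor <;> nlinarith [ih.1, ih.2]
  have hrmono : Monotone r := by
    apply monotone_nat_of_le_succ
    intro n; rw [hrstep]; nlinarith [(hr01 n).1, (hr01 n).2]
  have hRnorm : ∀ n, ‖R n‖ ≤ r n := by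
    intro n; induction n with
    | zero => simp [hR0, hr0]
    | succ n ih =>
      rw [hRstep, hrstep, hsmul_norm]
      have : ‖Q' + R n * R n‖ ≤ ‖Q'‖ + ‖R n‖ * ‖R n‖ :=
        (norm_add_le _ _).trans (by gcongr; exact norm_mul_le _ _)
      nlinarith [norm_nonneg (R n), (hr01 n).1, norm_nonneg Q']
  have hRdiff : ∀ n, ‖R (n+1) - R n‖ ≤ r (n+1) - r n := by
    intro n; induction n with
    | zero =>
      have e1 : R (0+1) - R 0 = (2⁻¹ : ℂ) • Q' := by rw [hRstep 0, hR0]; simp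
      rw [e1, hsmul_norm, hrstep 0, hr0]
      nlinarith [hQ'norm, norm_nonneg Q']
    | succ n ih =>
      have key : R (n+1+1) - R (n+1)
          = (2⁻¹ : ℂ) • (R (n+1) * (R (n+1) - R n) + (R (n+1) - R n) * R n) := by
        rw [hRstep (n+1), hRstep n, ← smul_sub]
        congr 1
        noncomm_ring
      calc ‖R (n+1+1) - R (n+1)‖
          = 2⁻¹ * ‖R (n+1) * (R (n+1) - R n) + (R (n+1) - R n) * R n‖ := by
            rw [key, hsmul_norm]
        _ ≤ 2⁻¹ * ((r (n+1) + r n) * (r (n+1) - r n)) := by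
            have h1 : ‖R (n+1) * (R (n+1) - R n) + (R (n+1) - R n) * R n‖
                ≤ ‖R (n+1)‖ * ‖R (n+1) - R n‖ + ‖R (n+1) - R n‖ * ‖R n‖ :=
              (norm_add_le _ _).trans (by gcongr <;> exact norm_mul_le _ _)
            have p1 : ‖R (n+1)‖ * ‖R (n+1) - R n‖ ≤ r (n+1) * (r (n+1) - r n) :=
              mul_le_mul (hRnorm (n+1)) ih (norm_nonneg _) (hr01 (n+1)).1
            have p2 : ‖R (n+1) - R n‖ * ‖R n‖ ≤ (r (n+1) - r n) * r n := by
              exact mul_le_mul ih (hRnorm n) (norm_nonneg _)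
                (by linarith [(hr01 n).1, hrmono (Nat.le_succ n)])
            nlinarith
        _ = r (n+1+1) - r (n+1) := by rw [hrstep (n+1), hrstep n]; ring
  have hRdist : ∀ m n, m ≤ n → ‖R n - R m‖ ≤ r n - r m := by
    intro m n hmn
    induction n, hmn using Nat.le_induction with
    | base => simp
    | succ n hmn ih =>
      calc ‖R (n+1) - R m‖ ≤ ‖R (n+1) - R n‖ + ‖R n - R m‖ :=
            norm_sub_le_norm_sub_add_norm_sub _ _ _
        _ ≤ (r (n+1) - r n) + (r n - r m) := add_le_add (hRdiff n) ih
        _ = r (n+1) - r m := by ring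
  have hrC : CauchySeq r := by
    have : ∃ L, Filter.Tendsto r Filter.atTop (nhds L) :=
      ⟨_, tendsto_atTop_ciSup hrmono ⟨1, by rintro x ⟨n, rfl⟩; exact (hr01 n).2⟩⟩
    exact this.choose_spec.cauchySeq
  have hRC : CauchySeq R := by
    rw [Metric.cauchySeq_iff'] at hrC ⊢
    intro ε hε
    obtain ⟨N, hN⟩ := hrC ε hε
    refine ⟨N, fun n hn => ?_⟩
    rw [dist_eq_norm]
    calc ‖R n - R N‖ ≤ r n - r N := hRdist N n hn
      _ ≤ |r n - r N| := le_abs_self _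
      _ < ε := by rw [← Real.dist_eq]; exact hN n hn
  obtain ⟨W, hW⟩ := cauchySeq_tendsto_of_complete hRC
  have hWfix : W = (2⁻¹ : ℂ) • (Q' + W * W) := by
    refine tendsto_nhds_unique (hW.comp (Filter.tendsto_add_atTop_nat 1)) ?_
    have h2 : Filter.Tendsto (fun n => (2⁻¹ : ℂ) • (Q' + R n * R n)) Filter.atTop
        (nhds ((2⁻¹ : ℂ) • (Q' + W * W))) :=
      (tendsto_const_nhds.add (hW.mul hW)).const_smul _
    simpa only [← hRstep, Function.comp_def] using h2
  have happly : ∀ (c : E), Filter.Tendsto (fun n => R n c) Filter.atTop (nhds (W c)) :=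
    fun c => ((ContinuousLinearMap.apply ℂ E c).continuous.tendsto W).comp hW
  have hWsym : ∀ a b : E, ⟪W a, b⟫ = ⟪a, W b⟫ := by
    have hRsym : ∀ n, ∀ a b : E, ⟪R n a, b⟫ = ⟪a, R n b⟫ := by
      intro n; induction n with
      | zero => intro a b; rw [hR0]; simp
      | succ n ih =>
        intro a b
        have h1 : R (n+1) a = (2⁻¹ : ℂ) • (Q' a + R n (R n a)) := by rw [hRstep]; rfl
        have h2 : R (n+1) b = (2⁻¹ : ℂ) • (Q' b + R n (R n b)) := by rw [hRstep]; rfl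
        rw [h1, h2, CStarModuleRight.inner_smul_left_complex, CStarModuleRight.inner_smul_right_complex]
        congr 1
        · simp [Complex.ext_iff]
        · simp only [CStarModuleRight.inner_add_left, CStarModuleRight.inner_add_right, hQ'sym, ih]
    intro a b
    have t1 : Filter.Tendsto (fun n => ⟪R n a, b⟫) Filter.atTop (nhds ⟪W a, b⟫) := by
      have hc := (CStarModuleRight.continuous_inner (A := A) (E := E)).tendsto (W a, b)
      exact hc.comp ((happly a).prodMk_nhds tendsto_const_nhds)
    have t2 : Filter.Tendsto (fun n => ⟪a, R n b⟫) Filter.atTop (nhds ⟪a, W b⟫) := by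
      have hc := (CStarModuleRight.continuous_inner (A := A) (E := E)).tendsto (a, W b)
      exact hc.comp (tendsto_const_nhds.prodMk_nhds (happly b))
    exact tendsto_nhds_unique (by simpa only [hRsym] using t1) t2
  set V : E →L[ℂ] E := 1 - W with hVdef
  have hWW : W * W = (2:ℂ) • W - Q' := by
    have h2 : (2:ℂ) • W = Q' + W * W := by
      conv_lhs => rw [hWfix]
      rw [smul_smul]; norm_num
    rw [h2]; abel
  have hVV : V * V = 1 - Q' := by
    rw [hVdef]
    have hexp : (1 - W) * (1 - W) = 1 - W - W + W * W := by noncomm_ring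
    rw [hexp, hWW, two_smul]
    abel
  have hVsym : ∀ a b : E, ⟪V a, b⟫ = ⟪a, V b⟫ := by
    intro a b
    have h1 : V a = a - W a := rfl
    have h2 : V b = b - W b := rfl
    rw [h1, h2]
    simp only [CStarModuleRight.inner_sub_left, CStarModuleRight.inner_sub_right, hWsym]
  have hkey : ⟪a, Q' a⟫ ≤ ⟪a, a⟫ := by
    rw [← sub_nonneg]
    have h1 : ⟪a, a⟫ - ⟪a, Q' a⟫ = ⟪a, V (V a)⟫ := by
      have hva : V (V a) = a - Q' a := by
        have := congrArg (fun (X : E →L[ℂ] E) => X a) hVV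
        simpa using this
      rw [hva, CStarModuleRight.inner_sub_right]
    rw [h1, ← hVsym]
    exact CStarModuleRight.inner_self_nonneg
  have hQa : Q a = (lam : ℂ) • Q' a := by
    have h1 : Q' a = (lam⁻¹ : ℂ) • Q a := rfl
    rw [h1, smul_smul]
    rw [show ((lam : ℂ) * (lam : ℂ)⁻¹) = 1 from
      mul_inv_cancel₀ (by exact_mod_cast hlam0.ne')]
    simp
  rw [hQa, CStarModuleRight.inner_smul_right_complex]
  have hreal : ∀ c : A, (lam : ℂ) • c = lam • c := fun c => by simp
  rw [hreal, hreal]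
  exact smul_le_smul_of_nonneg_left hkey hlam0.le

theorem stmt_8' (T T' S S' : E →L[ℂ] E)
    (hT : ∀ (x y : E), inner (𝕜 := A) (T x) y = inner (𝕜 := A) x (T' y))
    (hS : ∀ (x y : E), inner (𝕜 := A) (S x) y = inner (𝕜 := A) x (S' y))
    (hTc : ∀ x : E, ∃ m ∈ closure (Set.range ⇑T'), ∃ n : E,
      (∀ y ∈ closure (Set.range ⇑T'), inner (𝕜 := A) y n = 0) ∧ x = m + n)
    (hrange : Set.range ⇑S ⊆ Set.range ⇑T) :
    (∃ lam : ℝ, 0 < lam ∧ ∀ x : E,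
      inner (𝕜 := A) x (S (S' x)) ≤ (lam : ℂ) • inner (𝕜 := A) x (T (T' x))) ∧
    Set.range (⇑S ∘ ⇑S') ⊆ Set.range ⇑T := by
  classical
  set P : Set E := closure (Set.range ⇑T') with hPdef
  -- uniqueness from inner products
  have inner_ext : ∀ w w' : E, (∀ u : E, ⟪u, w⟫ = ⟪u, w'⟫) → w = w' := by
    intro w w' h
    have h0 : ⟪w - w', w - w'⟫ = 0 := by
      rw [CStarModuleRight.inner_sub_right, h (w - w'), sub_self]
    rw [CStarModuleRight.inner_self] at h0
    exact sub_eq_zero.mp h0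
  -- P is a closed submodule
  have hPclosed : IsClosed P := isClosed_closure
  set Psub : Submodule ℂ E := (LinearMap.range (T' : E →ₗ[ℂ] E)).topologicalClosure
    with hPsubdef
  have hPcarrier : ∀ v : E, v ∈ P ↔ v ∈ Psub := by
    intro v
    change v ∈ closure (Set.range ⇑T')
      ↔ v ∈ closure ((LinearMap.range (T' : E →ₗ[ℂ] E)) : Set E)
    rw [LinearMap.coe_range, ContinuousLinearMap.coe_coe]
  have hPadd : ∀ m₁ ∈ P, ∀ m₂ ∈ P, m₁ + m₂ ∈ P := fun m₁ h₁ m₂ h₂ =>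
    (hPcarrier _).mpr (Psub.add_mem ((hPcarrier _).mp h₁) ((hPcarrier _).mp h₂))
  have hPsub' : ∀ m₁ ∈ P, ∀ m₂ ∈ P, m₁ - m₂ ∈ P := fun m₁ h₁ m₂ h₂ =>
    (hPcarrier _).mpr (Psub.sub_mem ((hPcarrier _).mp h₁) ((hPcarrier _).mp h₂))
  have hPsmul : ∀ (c : ℂ), ∀ m ∈ P, c • m ∈ P := fun c m h =>
    (hPcarrier _).mpr (Psub.smul_mem c ((hPcarrier _).mp h))
  -- T kills vectors orthogonal to P
  have hTkill : ∀ n : E, (∀ y ∈ P, ⟪y, n⟫ = 0) → T n = 0 := by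
    intro n hn
    have h1 : ∀ z : E, ⟪T n, z⟫ = 0 := by
      intro z
      rw [hT n z, ← CStarModuleRight.star_inner (T' z) n,
        hn (T' z) (subset_closure (Set.mem_range_self z)), star_zero]
    have h2 : ⟪T n, T n⟫ = 0 := by
      rw [← CStarModuleRight.star_inner, h1 (T n), star_zero]
    rw [CStarModuleRight.inner_self] at h2
    exact h2
  -- injectivity of T on P
  have hTinjP : ∀ m ∈ P, ∀ m' ∈ P, T m = T m' → m = m' := by
    intro m hmP m' hm'P hTT
    set d : E := m - m' with hd
    have hTd : T d = 0 := by rw [hd, map_sub, hTT, sub_self]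
    have hdorth : ∀ y ∈ P, ⟪y, d⟫ = 0 := by
      have hbase : ∀ z : E, ⟪T' z, d⟫ = 0 := by
        intro z
        rw [← CStarModuleRight.star_inner d (T' z), ← hT d z, hTd]
        simp
      have hcl : P ⊆ {y : E | ⟪y, d⟫ = 0} := by
        apply closure_minimal
        · rintro y ⟨z, rfl⟩; exact hbase z
        · exact isClosed_eq
            ((CStarModuleRight.continuous_inner (A := A) (E := E)).comp
              (continuous_id.prodMk continuous_const)) continuous_const
      exact fun y hy => hcl hy
    have hdP : d ∈ P := hPsub' m hmP m' hm'P
    have : ⟪d, d⟫ = 0 := hdorth d hdP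
    rw [CStarModuleRight.inner_self] at this
    exact sub_eq_zero.mp this
  -- the orthogonal decomposition
  choose mfun hmem nfun hperp hsplit using hTc
  -- the Douglas operator C
  choose ufun hu using fun x : E => hrange (Set.mem_range_self (f := ⇑S) x)
  set Cfun : E → E := fun x => mfun (ufun x) with hCdef
  have hCP : ∀ x, Cfun x ∈ P := fun x => hmem _
  have hTC : ∀ x, T (Cfun x) = S x := by
    intro x
    have h1 : T (ufun x) = T (mfun (ufun x)) + T (nfun (ufun x)) := by
      conv_lhs => rw [hsplit (ufun x)]
      rw [map_add]
    rw [hCdef]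
    have h2 : T (nfun (ufun x)) = 0 := hTkill _ (hperp (ufun x))
    rw [← hu x, h1, h2, add_zero]
  have hCuniq : ∀ (x m : E), m ∈ P → T m = S x → m = Cfun x := fun x m hmP hTm =>
    hTinjP m hmP _ (hCP x) (by rw [hTm, hTC])
  have hCadd : ∀ x y, Cfun (x + y) = Cfun x + Cfun y := by
    intro x y
    refine (hCuniq (x + y) _ (hPadd _ (hCP x) _ (hCP y)) ?_).symm
    rw [map_add, hTC, hTC, map_add]
  have hCsmul : ∀ (c : ℂ) (x : E), Cfun (c • x) = c • Cfun x := by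
    intro c x
    refine (hCuniq (c • x) _ (hPsmul c _ (hCP x)) ?_).symm
    rw [map_smul, hTC, map_smul]
  set Clin : E →ₗ[ℂ] E :=
    { toFun := Cfun
      map_add' := hCadd
      map_smul' := hCsmul } with hClindef
  have hCcont : Continuous Cfun := by
    apply Clin.continuous_of_seq_closed_graph
    intro u x y hux huy
    have hyP : y ∈ P := hPclosed.mem_of_tendsto huy
      (Filter.Eventually.of_forall fun n => hCP (u n))
    have hTy : T y = S x := by
      have t1 : Filter.Tendsto (fun n => T (Cfun (u n))) Filter.atTop (nhds (T y)) :=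
        (T.continuous.tendsto y).comp huy
      have t2 : Filter.Tendsto (fun n => S (u n)) Filter.atTop (nhds (S x)) :=
        (S.continuous.tendsto x).comp hux
      refine tendsto_nhds_unique ?_ t2
      simpa only [hTC] using t1
    exact (hCuniq x y hyP hTy)
  set CL : E →L[ℂ] E := ⟨Clin, hCcont⟩ with hCLdef
  have hCLapp : ∀ x, CL x = Cfun x := fun x => rfl
  have hCLnorm : ∀ x, ‖Cfun x‖ ≤ ‖CL‖ * ‖x‖ := fun x => CL.le_opNorm x
  -- norm bound for S' in terms of T'
  have hSkey : ∀ w : E, ⟪S' w, S' w⟫ = ⟪Cfun (S' w), T' w⟫ := by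
    intro w
    rw [← hS (S' w) w, ← hTC (S' w), hT]
  have hSbound : ∀ w : E, ‖S' w‖ ≤ ‖CL‖ * ‖T' w‖ := by
    intro w
    have h1 : ‖S' w‖ ^ 2 = ‖⟪S' w, S' w⟫‖ := CStarModuleRight.norm_sq_eq
    have h2 : ‖⟪Cfun (S' w), T' w⟫‖ ≤ ‖Cfun (S' w)‖ * ‖T' w‖ := CStarModuleRight.norm_inner_le E
    have h3 : ‖Cfun (S' w)‖ ≤ ‖CL‖ * ‖S' w‖ := hCLnorm (S' w)
    have h4 : ‖S' w‖ ^ 2 ≤ ‖CL‖ * ‖S' w‖ * ‖T' w‖ := by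
      rw [h1, hSkey w]
      calc ‖⟪Cfun (S' w), T' w⟫‖ ≤ ‖Cfun (S' w)‖ * ‖T' w‖ := h2
        _ ≤ ‖CL‖ * ‖S' w‖ * ‖T' w‖ := by
            apply mul_le_mul_of_nonneg_right h3 (norm_nonneg _)
    rcases eq_or_lt_of_le (norm_nonneg (S' w)) with h0 | h0
    · rw [← h0]; positivity
    · nlinarith [norm_nonneg (T' w), norm_nonneg (CL : E →L[ℂ] E)]
  -- construction of the adjoint C'
  have hC'exists : ∀ y : E, ∃ w : E, ∀ x : E, ⟪Cfun x, y⟫ = ⟪x, w⟫ := by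
    intro y
    obtain ⟨u, huP, hulim⟩ := mem_closure_iff_seq_limit.mp (hmem y)
    choose z hz using huP
    have hcauchy : CauchySeq (fun n => S' (z n)) := by
      have huC : CauchySeq u := hulim.cauchySeq
      rw [Metric.cauchySeq_iff'] at huC ⊢
      intro ε hε
      have hpos : (0:ℝ) < ε / (‖CL‖ + 1) := by positivity
      obtain ⟨N, hN⟩ := huC _ hpos
      refine ⟨N, fun n hn => ?_⟩
      have hd : dist (S' (z n)) (S' (z N)) = ‖S' (z n - z N)‖ := by
        rw [dist_eq_norm, ← map_sub]
      rw [hd]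
      calc ‖S' (z n - z N)‖ ≤ ‖CL‖ * ‖T' (z n - z N)‖ := hSbound _
        _ = ‖CL‖ * ‖u n - u N‖ := by rw [map_sub, hz, hz]
        _ ≤ ‖CL‖ * (ε / (‖CL‖ + 1)) := by
            apply mul_le_mul_of_nonneg_left _ (norm_nonneg _)
            rw [← dist_eq_norm]
            exact (hN n hn).le
        _ < (‖CL‖ + 1) * (ε / (‖CL‖ + 1)) := by
            apply mul_lt_mul_of_pos_right _ hpos
            linarith
        _ = ε := by field_simp
    obtain ⟨w, hw⟩ := cauchySeq_tendsto_of_complete hcauchy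
    refine ⟨w, fun x => ?_⟩
    have e1 : ⟪Cfun x, y⟫ = ⟪Cfun x, mfun y⟫ := by
      conv_lhs => rw [hsplit y]
      rw [CStarModuleRight.inner_add_right, hperp y (Cfun x) (hCP x), add_zero]
    rw [e1]
    have t1 : Filter.Tendsto (fun n => ⟪Cfun x, u n⟫) Filter.atTop
        (nhds ⟪Cfun x, mfun y⟫) := by
      have hc := (CStarModuleRight.continuous_inner (A := A) (E := E)).tendsto (Cfun x, mfun y)
      exact hc.comp (tendsto_const_nhds.prodMk_nhds hulim)
    have t2 : Filter.Tendsto (fun n => ⟪x, S' (z n)⟫) Filter.atTop (nhds ⟪x, w⟫) := by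
      have hc := (CStarModuleRight.continuous_inner (A := A) (E := E)).tendsto (x, w)
      exact hc.comp (tendsto_const_nhds.prodMk_nhds hw)
    refine tendsto_nhds_unique ?_ t2
    have heq : ∀ n, ⟪Cfun x, u n⟫ = ⟪x, S' (z n)⟫ := by
      intro n
      rw [← hz n, ← hT (Cfun x) (z n), hTC x, hS x (z n)]
    simpa only [heq] using t1
  choose C'fun hC' using hC'exists
  -- C' is linear and bounded
  have hC'add : ∀ y₁ y₂, C'fun (y₁ + y₂) = C'fun y₁ + C'fun y₂ := by
    intro y₁ y₂
    apply inner_ext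
    intro u
    rw [← hC' (y₁ + y₂) u, CStarModuleRight.inner_add_right, CStarModuleRight.inner_add_right,
      hC' y₁ u, hC' y₂ u]
  have hC'smul : ∀ (c : ℂ) (y : E), C'fun (c • y) = c • C'fun y := by
    intro c y
    apply inner_ext
    intro u
    rw [← hC' (c • y) u, CStarModuleRight.inner_smul_right_complex,
      CStarModuleRight.inner_smul_right_complex, hC' y u]
  have hC'bound : ∀ y, ‖C'fun y‖ ≤ ‖CL‖ * ‖y‖ := by
    intro y
    have h1 : ‖C'fun y‖ ^ 2 = ‖⟪C'fun y, C'fun y⟫‖ := CStarModuleRight.norm_sq_eq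
    have h2 : ⟪C'fun y, C'fun y⟫ = ⟪Cfun (C'fun y), y⟫ := (hC' y (C'fun y)).symm
    have h4 : ‖C'fun y‖ ^ 2 ≤ ‖CL‖ * ‖C'fun y‖ * ‖y‖ := by
      rw [h1, h2]
      calc ‖⟪Cfun (C'fun y), y⟫‖ ≤ ‖Cfun (C'fun y)‖ * ‖y‖ := CStarModuleRight.norm_inner_le E
        _ ≤ ‖CL‖ * ‖C'fun y‖ * ‖y‖ :=
            mul_le_mul_of_nonneg_right (hCLnorm _) (norm_nonneg _)
    rcases eq_or_lt_of_le (norm_nonneg (C'fun y)) with h0 | h0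
    · rw [← h0]; positivity
    · nlinarith [norm_nonneg y, norm_nonneg (CL : E →L[ℂ] E)]
  set C'lin : E →ₗ[ℂ] E :=
    { toFun := C'fun
      map_add' := hC'add
      map_smul' := hC'smul } with hC'lindef
  set C'op : E →L[ℂ] E := C'lin.mkContinuous ‖CL‖ hC'bound with hC'opdef
  have hC'app : ∀ y, C'op y = C'fun y := fun y => rfl
  -- the operator Q = C ∘ C'
  set Qop : E →L[ℂ] E := CL.comp C'op with hQdef
  have hQapp : ∀ a, Qop a = Cfun (C'fun a) := fun a => rfl
  have hQform : ∀ a b : E, ⟪Qop a, b⟫ = ⟪C'fun a, C'fun b⟫ := by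
    intro a b
    rw [hQapp, hC' b (C'fun a)]
  have hQsym : ∀ a b : E, ⟪Qop a, b⟫ = ⟪a, Qop b⟫ := by
    intro a b
    rw [hQform a b, ← CStarModuleRight.star_inner (Qop b) a, hQform b a,
      CStarModuleRight.star_inner]
  -- C' ∘ T' = S'
  have hC'T' : ∀ x : E, C'fun (T' x) = S' x := by
    intro x
    apply inner_ext
    intro u
    rw [← hC' (T' x) u, ← hT (Cfun u) x, hTC u, hS u x]
  -- conclusion
  refine ⟨⟨‖Qop‖ + 1, by positivity, fun x => ?_⟩, ?_⟩
  · have hmain := sym_bound Qop hQsym (‖Qop‖ + 1)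
      (by linarith [norm_nonneg (Qop : E →L[ℂ] E)])
      (by positivity) (T' x)
    have e1 : ⟪T' x, Qop (T' x)⟫ = ⟪S' x, S' x⟫ := by
      rw [← CStarModuleRight.star_inner (Qop (T' x)) (T' x), hQform, hC'T',
        CStarModuleRight.star_inner]
    have e2 : inner (𝕜 := A) x (S (S' x)) = ⟪S' x, S' x⟫ := by
      rw [← CStarModuleRight.star_inner (S (S' x)) x, hS (S' x) x, CStarModuleRight.star_inner]
    have e3 : inner (𝕜 := A) x (T (T' x)) = ⟪T' x, T' x⟫ := by
      rw [← CStarModuleRight.star_inner (T (T' x)) x, hT (T' x) x, CStarModuleRight.star_inner]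
    rw [e2, e3]
    rw [e1] at hmain
    exact hmain
  · rintro v ⟨x, rfl⟩
    exact hrange (Set.mem_range_self (f := ⇑S) (S' x))

end

/-- If `A, B` are adjointable operators on a Hilbert C*-module whose adjoints have orthogonally
complemented range closures, and `range B ⊆ range A`, then `BB* ≤ λ AA*` for some `λ > 0` and
`range (BB*) ⊆ range A`. -/
theorem stmt_8 {A E : Type*} [NonUnitalCStarAlgebra A] [PartialOrder A] [StarOrderedRing A]
    [NormedAddCommGroup E] [NormedSpace ℂ E] [SMul Aᵐᵒᵖ E] [CStarModuleRight A E] [CompleteSpace E]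
    (T T' S S' : E →L[ℂ] E)
    (hT : ∀ (x y : E), inner (𝕜 := A) (T x) y = inner (𝕜 := A) x (T' y))
    (hS : ∀ (x y : E), inner (𝕜 := A) (S x) y = inner (𝕜 := A) x (S' y))
    (hTc : OrthoComplemented (A := A) (closure (Set.range ⇑T')))
    (hSc : OrthoComplemented (A := A) (closure (Set.range ⇑S')))
    (hrange : Set.range ⇑S ⊆ Set.range ⇑T) :
    (∃ lam : ℝ, 0 < lam ∧ ∀ x : E,
      inner (𝕜 := A) x (S (S' x)) ≤ (lam : ℂ) • inner (𝕜 := A) x (T (T' x))) ∧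
    Set.range (⇑S ∘ ⇑S') ⊆ Set.range ⇑T := by
  exact stmt_8' T T' S S' hT hS hTc hrange
end

section
/- Let 𝓗 be a complex Hilbert space, M ⊆ B(𝓗) a von Neumann algebra, and A, B ∈ M with A injective and BB* ≤ λ AA* for some λ > 0. Then there exists S ∈ M with AS = B. -/
open ContinuousLinearMap in
theorem douglas_aux {𝓗 : Type*} [NormedAddCommGroup 𝓗] [InnerProductSpace ℂ 𝓗]
    [CompleteSpace 𝓗] (A' B' : 𝓗 →L[ℂ] 𝓗) (c : ℝ)
    (key : ∀ h, ‖B' h‖ ≤ c * ‖A' h‖) :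
    ∃ D : 𝓗 →L[ℂ] 𝓗, (∀ h, D (A' h) = B' h) ∧
      ∀ T : 𝓗 →L[ℂ] 𝓗, (∀ x, T (A' x) = A' (T x)) → (∀ x, T (B' x) = B' (T x)) →
        (∀ x, (adjoint T) (A' x) = A' ((adjoint T) x)) →
        ∀ x, T (D x) = D (T x) := by
  classical
  set A'ₗ : 𝓗 →ₗ[ℂ] 𝓗 := (A' : 𝓗 →ₗ[ℂ] 𝓗) with hA'ₗ
  set B'ₗ : 𝓗 →ₗ[ℂ] 𝓗 := (B' : 𝓗 →ₗ[ℂ] 𝓗) with hB'ₗ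
  have hker : LinearMap.ker A'ₗ ≤ LinearMap.ker B'ₗ := by
    intro h hh
    rw [LinearMap.mem_ker] at hh ⊢
    have h0 : A' h = 0 := hh
    have hb := key h
    rw [h0, norm_zero, mul_zero] at hb
    show B' h = 0
    exact norm_le_zero_iff.mp hb
  set K : Submodule ℂ 𝓗 := LinearMap.range A'ₗ with hK
  set g : K →ₗ[ℂ] 𝓗 :=
    ((LinearMap.ker A'ₗ).liftQ B'ₗ hker).comp
      (A'ₗ.quotKerEquivRange.symm : K →ₗ[ℂ] (𝓗 ⧸ LinearMap.ker A'ₗ)) with hgdef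
  have hg : ∀ (h : 𝓗) (hm : A' h ∈ K), g ⟨A' h, hm⟩ = B' h := by
    intro h hm
    have h1 : (A'ₗ.quotKerEquivRange).symm ⟨A' h, hm⟩ = Submodule.Quotient.mk h := by
      rw [LinearEquiv.symm_apply_eq]
      exact Subtype.ext (A'ₗ.quotKerEquivRange_apply_mk h).symm
    simp only [hgdef, LinearMap.comp_apply, LinearEquiv.coe_coe, h1, Submodule.liftQ_apply]
    rfl
  have gbound : ∀ x : K, ‖g x‖ ≤ c * ‖x‖ := by
    rintro ⟨x, h, rfl⟩
    have hx : g ⟨A'ₗ h, ⟨h, rfl⟩⟩ = B' h := hg h ⟨h, rfl⟩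
    rw [hx]
    exact key h
  set g0 : K →L[ℂ] 𝓗 := g.mkContinuous c gbound with hg0def
  have hg0 : ∀ x : K, g0 x = g x := fun x => rfl
  set Kc : Submodule ℂ 𝓗 := K.topologicalClosure with hKc
  have hKKc : K ≤ Kc := K.le_topologicalClosure
  set li : K →ₗᵢ[ℂ] Kc := ⟨Submodule.inclusion hKKc, fun x => rfl⟩ with hli
  set e : K →L[ℂ] Kc := li.toContinuousLinearMap with he
  have hui : IsUniformInducing e := li.isometry.isUniformInducing
  have hde : DenseRange e := by
    intro y
    rw [closure_subtype]
    have himg : ((↑) '' Set.range e : Set 𝓗) = (K : Set 𝓗) := by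
      ext z
      constructor
      · rintro ⟨w, ⟨u, rfl⟩, rfl⟩
        exact u.2
      · intro hz
        exact ⟨e ⟨z, hz⟩, ⟨⟨z, hz⟩, rfl⟩, rfl⟩
    rw [himg]
    exact y.2
  set D0 : Kc →L[ℂ] 𝓗 := g0.extend e with hD0def
  have hD0e : ∀ x : K, D0 (e x) = g0 x := fun x => ContinuousLinearMap.extend_eq (f := g0) (e := e) hde hui x
  set P : 𝓗 →L[ℂ] Kc := Kc.orthogonalProjectionOnto with hP
  set D : 𝓗 →L[ℂ] 𝓗 := D0.comp P with hD
  have hDK : ∀ (x : 𝓗) (hx : x ∈ Kc), D x = D0 ⟨x, hx⟩ := by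
    intro x hx
    have : P x = ⟨x, hx⟩ := Submodule.orthogonalProjectionOnto_mem_subspace_eq_self (⟨x, hx⟩ : Kc)
    simp only [hD, ContinuousLinearMap.comp_apply, this]
  have hDA : ∀ h, D (A' h) = B' h := by
    intro h
    have hmK : A' h ∈ K := ⟨h, rfl⟩
    have hm : A' h ∈ Kc := hKKc hmK
    rw [hDK _ hm]
    have : (⟨A' h, hm⟩ : Kc) = e ⟨A' h, hmK⟩ := rfl
    rw [this, hD0e, hg0, hg]
  refine ⟨D, hDA, ?_⟩
  intro T hTA hTB hTA' x
  have hTK : ∀ z ∈ Kc, T z ∈ Kc := by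
    intro z hz
    have hz' : z ∈ closure (K : Set 𝓗) := hz
    have h1 : T z ∈ closure (T '' (K : Set 𝓗)) :=
      image_closure_subset_closure_image T.continuous ⟨z, hz', rfl⟩
    have h2 : T '' (K : Set 𝓗) ⊆ (K : Set 𝓗) := by
      rintro _ ⟨w, ⟨h, rfl⟩, rfl⟩
      exact (hTA h) ▸ ⟨T h, rfl⟩
    exact (closure_mono h2) h1
  have hT'K : ∀ z ∈ Kc, adjoint T z ∈ Kc := by
    intro z hz
    have hz' : z ∈ closure (K : Set 𝓗) := hz
    have h1 : adjoint T z ∈ closure (adjoint T '' (K : Set 𝓗)) :=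
      image_closure_subset_closure_image (adjoint T).continuous ⟨z, hz', rfl⟩
    have h2 : adjoint T '' (K : Set 𝓗) ⊆ (K : Set 𝓗) := by
      rintro _ ⟨w, ⟨h, rfl⟩, rfl⟩
      exact (hTA' h) ▸ ⟨adjoint T h, rfl⟩
    exact (closure_mono h2) h1
  have hTperp : ∀ z ∈ Kcᗮ, T z ∈ Kcᗮ := by
    intro z hz
    rw [Submodule.mem_orthogonal]
    intro w hw
    have : (inner ℂ w (T z) : ℂ) = inner ℂ (adjoint T w) z := (adjoint_inner_left T z w).symm
    rw [this]
    exact (Submodule.mem_orthogonal Kc z).mp hz _ (hT'K w hw)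
  have hcomm_cl : ∀ z ∈ Kc, T (D z) = D (T z) := by
    have heq : Set.EqOn (T ∘ D) (D ∘ T) (K : Set 𝓗) := by
      rintro _ ⟨h, rfl⟩
      show T (D (A' h)) = D (T (A' h))
      rw [hDA, hTB, hTA, hDA]
    have hcl := heq.closure (T.continuous.comp D.continuous) (D.continuous.comp T.continuous)
    intro z hz
    exact hcl hz
  have hDperp : ∀ z ∈ Kcᗮ, D z = 0 := by
    intro z hz
    have : P z = 0 := Submodule.orthogonalProjectionOnto_apply_of_mem_orthogonal hz
    simp only [hD, ContinuousLinearMap.comp_apply, this, map_zero]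
  set y : 𝓗 := (P x : 𝓗) with hy
  have hymem : y ∈ Kc := SetLike.coe_mem _
  have hDxy : D x = D y := by
    rw [hDK y hymem]
    have : P x = ⟨y, hymem⟩ := by
      ext
      rfl
    simp only [hD, ContinuousLinearMap.comp_apply, this]
  have hperp : x - y ∈ Kcᗮ := Kc.sub_starProjection_mem_orthogonal x
  have hTxy : D (T (x - y)) = 0 := hDperp _ (hTperp _ hperp)
  calc T (D x) = T (D y) := by rw [hDxy]
    _ = D (T y) := hcomm_cl y hymem
    _ = D (T y) + D (T (x - y)) := by rw [hTxy, add_zero]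
    _ = D (T y + T (x - y)) := (map_add D _ _).symm
    _ = D (T x) := by rw [← map_add, add_sub_cancel]


open ContinuousLinearMap in
/-- If `M` is a von Neumann algebra on a complex Hilbert space, `A, B ∈ M`, `A` is injective and
`BB* ≤ λ AA*` for some `λ > 0`, then there exists `S ∈ M` with `AS = B`. -/
theorem stmt_12 {𝓗 : Type*} [NormedAddCommGroup 𝓗] [InnerProductSpace ℂ 𝓗] [CompleteSpace 𝓗]
    (M : VonNeumannAlgebra 𝓗) (A B : 𝓗 →L[ℂ] 𝓗) (hA : A ∈ M) (hB : B ∈ M)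
    (hAinj : Function.Injective (A : 𝓗 → 𝓗))
    (hle : ∃ lam : ℝ, 0 < lam ∧ B * star B ≤ lam • (A * star A)) :
    ∃ S : 𝓗 →L[ℂ] 𝓗, S ∈ M ∧ A * S = B := by
  obtain ⟨lam, hlam, hle⟩ := hle
  have key : ∀ h : 𝓗, ‖adjoint B h‖ ≤ Real.sqrt lam * ‖adjoint A h‖ := by
    intro h
    rw [le_def] at hle
    have h1 := hle.2 h
    rw [reApplyInnerSelf] at h1
    simp only [sub_apply, inner_sub_left, map_sub] at h1
    have e1 : RCLike.re (inner ℂ ((B * star B) h) h : ℂ) = ‖adjoint B h‖^2 := by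
      rw [ContinuousLinearMap.mul_apply, star_eq_adjoint, ← adjoint_inner_right, inner_self_eq_norm_sq]
    have e2 : RCLike.re (inner ℂ ((lam • (A * star A)) h) h : ℂ) = lam * ‖adjoint A h‖^2 := by
      rw [smul_apply]
      rw [show (lam • ((A * star A) h)) = (lam : ℂ) • ((A * star A) h) by
        simp [Complex.real_smul]]
      rw [inner_smul_left, ContinuousLinearMap.mul_apply, star_eq_adjoint, ← adjoint_inner_right,
        inner_self_eq_norm_sq_to_K]
      simp [RCLike.mul_re, Complex.conj_ofReal]
      exact Or.inl (by norm_cast)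
    rw [e1, e2] at h1
    have h2 : ‖adjoint B h‖^2 ≤ lam * ‖adjoint A h‖^2 := by linarith
    calc ‖adjoint B h‖ = Real.sqrt (‖adjoint B h‖^2) := by
          rw [Real.sqrt_sq (norm_nonneg _)]
      _ ≤ Real.sqrt (lam * ‖adjoint A h‖^2) := Real.sqrt_le_sqrt h2
      _ = Real.sqrt lam * ‖adjoint A h‖ := by
          rw [Real.sqrt_mul hlam.le, Real.sqrt_sq (norm_nonneg _)]
  obtain ⟨D, hDA, hDcomm⟩ := douglas_aux (adjoint A) (adjoint B) (Real.sqrt lam) key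
  have hDmem : D ∈ M := by
    rw [← M.commutant_commutant]
    rw [VonNeumannAlgebra.mem_commutant_iff]
    intro T hT
    have hTmem := VonNeumannAlgebra.mem_commutant_iff.mp hT
    have hTA : ∀ x, T (adjoint A x) = adjoint A (T x) := by
      intro x
      have := hTmem (star A) (star_mem hA)
      have h2 := DFunLike.congr_fun this x
      simpa [mul_apply, star_eq_adjoint] using h2.symm
    have hTB : ∀ x, T (adjoint B x) = adjoint B (T x) := by
      intro x
      have := hTmem (star B) (star_mem hB)
      have h2 := DFunLike.congr_fun this x
      simpa [mul_apply, star_eq_adjoint] using h2.symm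
    have hT' : star T ∈ M.commutant := star_mem hT
    have hTA' : ∀ x, (adjoint T) (adjoint A x) = adjoint A ((adjoint T) x) := by
      intro x
      have := VonNeumannAlgebra.mem_commutant_iff.mp hT' (star A) (star_mem hA)
      have h2 := DFunLike.congr_fun this x
      simpa [mul_apply, star_eq_adjoint] using h2.symm
    ext x
    exact hDcomm T hTA hTB hTA' x
  refine ⟨star D, star_mem hDmem, ?_⟩
  have hcomp : D ∘L adjoint A = adjoint B := by
    ext h
    exact hDA h
  have := congrArg ContinuousLinearMap.adjoint hcomp
  rw [adjoint_comp, adjoint_adjoint, adjoint_adjoint] at this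
  rw [mul_def, star_eq_adjoint]
  exact this
end

section
/- Let A = C[0,1] and M = {f ∈ A : f(0) = 0}, regarded as Hilbert A-modules. Define Ã, C̃ on E = A ⊕ M by the block matrices Ã = [[0, A],[0,0]] and C̃ = [[C,0],[0,0]], where (Af)(λ) = λf(λ) for f ∈ M and (Cf)(λ) = λf(λ) for f ∈ A. Then C̃C̃* = ÃÃ* but the range of C̃ is not contained in the range of Ã; in particular the function f₀(λ) = λ gives (f₀, 0) ∈ range(C̃) \ range(Ã). -/
open scoped ComplexOrder

/-- The C*-algebra `A = C[0,1]`. -/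
abbrev CA : Type := C(Set.Icc (0:ℝ) 1, ℂ)

/-- The point `0` of `[0,1]`. -/
def pt0 : Set.Icc (0:ℝ) 1 := ⟨0, by norm_num⟩

/-- The maximal ideal `M = {f ∈ C[0,1] : f(0) = 0}`, regarded as a Hilbert `C[0,1]`-module. -/
def MA : Type := {f : CA // f pt0 = 0}

/-- The function `λ ↦ λ` as an element of `C[0,1]`. -/
def g0 : CA := ⟨fun t => ((t : ℝ) : ℂ), Complex.continuous_ofReal.comp continuous_subtype_val⟩

/-- `E = A ⊕ M` with its `C[0,1]`-valued inner product. -/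
noncomputable def innerE (p q : CA × MA) : CA := star p.1 * q.1 + star p.2.1 * q.2.1

/-- `Ã = [[0, A],[0,0]]` where `(Af)(λ) = λ f(λ)` on `M`. -/
noncomputable def Atil (p : CA × MA) : CA × MA :=
  (g0 * p.2.1, ⟨0, by simp⟩)

/-- The adjoint `Ã* = [[0,0],[A*,0]]` where `(A*f)(λ) = λ f(λ)` maps `A` into `M`. -/
noncomputable def AtilStar (p : CA × MA) : CA × MA :=
  (0, ⟨g0 * p.1, by simp [g0, pt0]⟩)

/-- `C̃ = [[C,0],[0,0]]` where `(Cf)(λ) = λ f(λ)` on `A`; it is self-adjoint. -/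
noncomputable def Ctil (p : CA × MA) : CA × MA :=
  (g0 * p.1, ⟨0, by simp⟩)

lemma star_g0 : star g0 = g0 := by
  ext t
  simp [g0, Complex.conj_ofReal]

lemma key : ∀ f : CA, f pt0 = 0 → g0 * f ≠ g0 := by
  intro f hf h
  have hval : ∀ t : Set.Icc (0:ℝ) 1, ((t : ℝ) : ℂ) * f t = ((t : ℝ) : ℂ) := by
    intro t
    have := congrFun (congrArg DFunLike.coe h) t
    simpa [g0] using this
  have hone : ∀ t : Set.Icc (0:ℝ) 1, (t : ℝ) ≠ 0 → f t = 1 := by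
    intro t ht
    have h1 := hval t
    have h2 : ((t : ℝ) : ℂ) ≠ 0 := by exact_mod_cast ht
    exact mul_left_cancel₀ h2 (by rw [h1, mul_one])
  -- sequence 1/(n+1) → 0
  set x : ℕ → Set.Icc (0:ℝ) 1 := fun n => ⟨1/(n+1), by
    constructor
    · positivity
    · rw [div_le_one (by positivity)]; linarith [Nat.cast_nonneg (α := ℝ) n]⟩ with hx
  have hxt : Filter.Tendsto x Filter.atTop (nhds pt0) := by
    rw [hx]
    unfold pt0
    rw [tendsto_subtype_rng]
    simpa using (tendsto_one_div_add_atTop_nhds_zero_nat : Filter.Tendsto (fun n : ℕ => 1 / ((n:ℝ) + 1)) Filter.atTop (nhds 0))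
  have : Filter.Tendsto (fun n => f (x n)) Filter.atTop (nhds (f pt0)) :=
    (f.continuous.tendsto pt0).comp hxt
  have heq : (fun n => f (x n)) = fun _ => (1:ℂ) := by
    funext n
    apply hone
    simp [hx]
    positivity
  rw [heq, hf] at this
  exact zero_ne_one (tendsto_nhds_unique tendsto_const_nhds this).symm

/-- `C̃C̃* = ÃÃ*` (with `C̃* = C̃`), yet the range of `C̃` is not contained in the range of `Ã`;
the element `(f₀, 0)` with `f₀(λ) = λ` lies in `range C̃ \ range Ã`. -/
theorem stmt_14 :
    -- `Ã*` is the adjoint of `Ã`, and `C̃` is self-adjoint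
    (∀ p q : CA × MA, innerE (Atil p) q = innerE p (AtilStar q)) ∧
    (∀ p q : CA × MA, innerE (Ctil p) q = innerE p (Ctil q)) ∧
    -- `C̃C̃* = ÃÃ*`
    (∀ p : CA × MA, Ctil (Ctil p) = Atil (AtilStar p)) ∧
    -- but `range C̃ ⊄ range Ã`, witnessed by `(f₀, 0)`
    (g0, (⟨0, by simp⟩ : MA)) ∈ Set.range Ctil ∧
    (g0, (⟨0, by simp⟩ : MA)) ∉ Set.range Atil ∧
    ¬ Set.range Ctil ⊆ Set.range Atil := by
  have hA : ∀ p q : CA × MA, innerE (Atil p) q = innerE p (AtilStar q) := by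
    intro p q
    simp [innerE, Atil, AtilStar, star_mul, star_g0]
    ring
  have hC : ∀ p q : CA × MA, innerE (Ctil p) q = innerE p (Ctil q) := by
    intro p q
    simp [innerE, Ctil, star_mul, star_g0]
    ring
  have hCC : ∀ p : CA × MA, Ctil (Ctil p) = Atil (AtilStar p) := by
    intro p
    simp [Ctil, Atil, AtilStar]
  have hmem : (g0, (⟨0, by simp⟩ : MA)) ∈ Set.range Ctil :=
    ⟨(1, ⟨0, by simp⟩), by simp [Ctil]; rfl⟩
  have hnot : (g0, (⟨0, by simp⟩ : MA)) ∉ Set.range Atil := by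
    rintro ⟨p, hp⟩
    have : g0 * p.2.1 = g0 := congrArg Prod.fst hp
    exact key p.2.1 p.2.2 this
  exact ⟨hA, hC, hCC, hmem, hnot, fun h => hnot (h hmem)⟩
end
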